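/- arXiv:2111.06169 — 4 statements merged into one kernel-verified Lean document; each statement's English description precedes it below -/
import Mathlib

section
/- Let c be a simple-model cost function on the infinite grid graph G with l layers, let s = (x_s, y_s, z_s) ∈ V, and let R = {(x, y, ζ) ∈ V : ξ⁻ ≤ x ≤ ξ⁺, υ⁻ ≤ y ≤ υ⁺} be a rectangle on a single layer ζ, where ξ⁻ ≤ ξ⁺ and υ⁻ ≤ υ⁺ are integers. Let r = (x_r, y_r, ζ) where x_r = max(ξ⁻, min(ξ⁺, x_s)) and y_r = max(υ⁻, min(υ⁺, y_s)) is the vertex of R that is coordinatewise closest to s. Then min_{v ∈ R} dist_{(G,c)}(s, v) = dist_{(G,c)}(s, r). -/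
/-- Vertices of the infinite grid graph: `(x, y, z)` where `z` is the layer. -/
abbrev Vtx : Type := ℤ × ℤ × ℤ

/-- Two vertices of the infinite grid graph with layers `1, …, l` are adjacent iff both have
their layer coordinate in `{1, …, l}` and they differ by exactly `1` in exactly one
coordinate.  An edge changing the first coordinate is horizontal, one changing the second
coordinate is vertical, and one changing the third coordinate is a via. -/
def Adj (l : ℤ) (u v : Vtx) : Prop :=
  1 ≤ u.2.2 ∧ u.2.2 ≤ l ∧ 1 ≤ v.2.2 ∧ v.2.2 ≤ l ∧
    |u.1 - v.1| + |u.2.1 - v.2.1| + |u.2.2 - v.2.2| = 1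

/-- Simple-model edge cost: a horizontal (resp. vertical) edge on layer `z` costs `ch z`
(resp. `cv z`) and a via between layers `z` and `z+1` costs `cvia z`. -/
def ecost (ch cv cvia : ℤ → ℝ) (u v : Vtx) : ℝ :=
  if u.1 ≠ v.1 then ch u.2.2
  else if u.2.1 ≠ v.2.1 then cv u.2.2
  else cvia (min u.2.2 v.2.2)

/-- The cost of a walk (given as the list of its vertices) is the sum of its edge costs. -/
def wcost (c : Vtx → Vtx → ℝ) : List Vtx → ℝ
  | [] => 0
  | [_] => 0
  | u :: v :: P => c u v + wcost c (v :: P)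

/-- `P` is a walk from `u` to `v` with respect to the adjacency relation `A`. -/
def IsWalkA (A : Vtx → Vtx → Prop) (P : List Vtx) (u v : Vtx) : Prop :=
  P ≠ [] ∧ P.Chain' A ∧ P.head? = some u ∧ P.getLast? = some v

/-- The distance between two vertices: the infimum cost of a walk between them. -/
noncomputable def gdistA (A : Vtx → Vtx → Prop) (c : Vtx → Vtx → ℝ) (u v : Vtx) : ℝ :=
  sInf { m : ℝ | ∃ P, IsWalkA A P u v ∧ wcost c P = m }

/-- The distance from a vertex to a set of vertices. -/
noncomputable def gdistSetA (A : Vtx → Vtx → Prop) (c : Vtx → Vtx → ℝ) (u : Vtx)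
    (T : Set Vtx) : ℝ :=
  sInf { m : ℝ | ∃ P v, v ∈ T ∧ IsWalkA A P u v ∧ wcost c P = m }

section Aux

variable {l : ℤ} {ch cv cvia : ℤ → ℝ}

/-- Clamp-projection of a vertex into a box in the x and y coordinates. -/
def prj (ax bx ay by' : ℤ) (u : Vtx) : Vtx :=
  (max ax (min bx u.1), max ay (min by' u.2.1), u.2.2)

lemma edge_pos (hch : ∀ z, 1 ≤ z → z ≤ l → 0 < ch z)
    (hcv : ∀ z, 1 ≤ z → z ≤ l → 0 < cv z)
    (hcvia : ∀ z, 1 ≤ z → z < l → 0 < cvia z)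
    {u v : Vtx} (h : Adj l u v) : 0 < ecost ch cv cvia u v := by
  obtain ⟨h1, h2, h3, h4, h5⟩ := h
  unfold ecost
  by_cases hx : u.1 = v.1
  · by_cases hy : u.2.1 = v.2.1
    · have hz : 1 ≤ min u.2.2 v.2.2 ∧ min u.2.2 v.2.2 < l := by
        simp only [Int.abs_eq_natAbs] at h5; omega
      simp only [hx, hy, ne_eq, not_true_eq_false, if_false]
      exact hcvia _ hz.1 hz.2
    · simp only [hx, ne_eq, not_true_eq_false, if_false, hy, if_true, not_false_eq_true]
      exact hcv _ h1 h2
  · simp only [ne_eq, hx, not_false_eq_true, if_true]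
    exact hch _ h1 h2

lemma wcost_nonneg (hch : ∀ z, 1 ≤ z → z ≤ l → 0 < ch z)
    (hcv : ∀ z, 1 ≤ z → z ≤ l → 0 < cv z)
    (hcvia : ∀ z, 1 ≤ z → z < l → 0 < cvia z) :
    ∀ P : List Vtx, P.Chain' (Adj l) → 0 ≤ wcost (ecost ch cv cvia) P := by
  intro P
  induction P with
  | nil => intro _; simp [wcost]
  | cons x P ih =>
    intro hc
    cases P with
    | nil => simp [wcost]
    | cons y R =>
      rw [List.Chain', List.isChain_cons_cons] at hc
      have h1 := edge_pos hch hcv hcvia hc.1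
      have h2 := ih hc.2
      simp only [wcost]
      linarith

lemma isWalk_cons {A : Vtx → Vtx → Prop} {P : List Vtx} {u w v : Vtx}
    (hP : IsWalkA A P w v) (h : A u w) : IsWalkA A (u :: P) u v := by
  obtain ⟨hne, hc, hh, hl⟩ := hP
  obtain ⟨y, R, rfl⟩ := List.exists_cons_of_ne_nil hne
  simp only [List.head?_cons, Option.some.injEq] at hh
  subst hh
  exact ⟨List.cons_ne_nil _ _, List.isChain_cons_cons.2 ⟨h, hc⟩, rfl,
    by rwa [List.getLast?_cons_cons]⟩

lemma walk_exists (l : ℤ) :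
    ∀ n : ℕ, ∀ u v : Vtx,
      (|u.1 - v.1| + |u.2.1 - v.2.1| + |u.2.2 - v.2.2|).toNat = n →
      1 ≤ u.2.2 → u.2.2 ≤ l → 1 ≤ v.2.2 → v.2.2 ≤ l →
      ∃ P, IsWalkA (Adj l) P u v := by
  intro n
  induction n with
  | zero =>
    intro u v h _ _ _ _
    have : u = v := by
      obtain ⟨a, b, c⟩ := u; obtain ⟨a', b', c'⟩ := v
      simp only [Int.abs_eq_natAbs] at h
      have : a = a' ∧ b = b' ∧ c = c' := by omega
      simp [this.1, this.2.1, this.2.2]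
    subst this
    exact ⟨[u], List.cons_ne_nil _ _, List.isChain_singleton _, rfl, rfl⟩
  | succ n ih =>
    intro u v h hu1 hu2 hv1 hv2
    obtain ⟨a, b, c⟩ := u
    obtain ⟨a', b', c'⟩ := v
    simp only [Int.abs_eq_natAbs] at h
    simp only at hu1 hu2 hv1 hv2
    have key : ∃ w : Vtx, Adj l (a, b, c) w ∧
        (|w.1 - a'| + |w.2.1 - b'| + |w.2.2 - c'|).toNat = n ∧
        1 ≤ w.2.2 ∧ w.2.2 ≤ l := by
      rcases lt_trichotomy a a' with hx | hx | hx
      · exact ⟨(a + 1, b, c), by simp only [Adj, Int.abs_eq_natAbs]; omega,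
          by simp only [Int.abs_eq_natAbs]; omega, hu1, hu2⟩
      · rcases lt_trichotomy b b' with hy | hy | hy
        · exact ⟨(a, b + 1, c), by simp only [Adj, Int.abs_eq_natAbs]; omega,
            by simp only [Int.abs_eq_natAbs]; omega, hu1, hu2⟩
        · rcases lt_trichotomy c c' with hz | hz | hz
          · refine ⟨(a, b, c + 1), by simp only [Adj, Int.abs_eq_natAbs]; omega,
              by simp only [Int.abs_eq_natAbs]; omega, by simp; omega, by simp; omega⟩
          · exfalso; omega
          · refine ⟨(a, b, c - 1), by simp only [Adj, Int.abs_eq_natAbs]; omega,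
              by simp only [Int.abs_eq_natAbs]; omega, by simp; omega, by simp; omega⟩
        · exact ⟨(a, b - 1, c), by simp only [Adj, Int.abs_eq_natAbs]; omega,
            by simp only [Int.abs_eq_natAbs]; omega, hu1, hu2⟩
      · exact ⟨(a - 1, b, c), by simp only [Adj, Int.abs_eq_natAbs]; omega,
          by simp only [Int.abs_eq_natAbs]; omega, hu1, hu2⟩
    obtain ⟨w, hadj, hdist, hw1, hw2⟩ := key
    obtain ⟨P, hP⟩ := ih w (a', b', c') hdist hw1 hw2 hv1 hv2
    exact ⟨(a, b, c) :: P, isWalk_cons hP hadj⟩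

lemma prj_step {ax bx ay by' : ℤ} (hax : ax ≤ bx) (hay : ay ≤ by')
    {u v : Vtx} (h : Adj l u v) :
    prj ax bx ay by' u = prj ax bx ay by' v ∨
      (Adj l (prj ax bx ay by' u) (prj ax bx ay by' v) ∧
        ecost ch cv cvia (prj ax bx ay by' u) (prj ax bx ay by' v) = ecost ch cv cvia u v) := by
  obtain ⟨h1, h2, h3, h4, h5⟩ := h
  simp only [Int.abs_eq_natAbs] at h5
  by_cases hx : u.1 = v.1
  · by_cases hy : u.2.1 = v.2.1
    · -- via edge
      right
      constructor
      · refine ⟨h1, h2, h3, h4, ?_⟩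
        simp only [prj, hx, hy, Int.abs_eq_natAbs]
        omega
      · simp [ecost, prj, hx, hy]
    · -- vertical edge
      have hz : u.2.2 = v.2.2 := by omega
      by_cases he : max ay (min by' u.2.1) = max ay (min by' v.2.1)
      · left; simp [prj, hx, he, hz]
      · right
        constructor
        · refine ⟨h1, h2, h3, h4, ?_⟩
          simp only [prj, hx, hz, Int.abs_eq_natAbs]
          omega
        · simp only [ecost, prj, hx, hz, he, ne_eq, not_true_eq_false, if_false,
            not_false_eq_true, if_true, hy]
  · -- horizontal edge
    have hy : u.2.1 = v.2.1 := by omega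
    have hz : u.2.2 = v.2.2 := by omega
    by_cases he : max ax (min bx u.1) = max ax (min bx v.1)
    · left; simp [prj, hy, he, hz]
    · right
      constructor
      · refine ⟨h1, h2, h3, h4, ?_⟩
        simp only [prj, hy, hz, Int.abs_eq_natAbs]
        omega
      · simp only [ecost, prj, he, ne_eq, not_false_eq_true, if_true, hx]

lemma prj_walk (hch : ∀ z, 1 ≤ z → z ≤ l → 0 < ch z)
    (hcv : ∀ z, 1 ≤ z → z ≤ l → 0 < cv z)
    (hcvia : ∀ z, 1 ≤ z → z < l → 0 < cvia z)
    {ax bx ay by' : ℤ} (hax : ax ≤ bx) (hay : ay ≤ by') :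
    ∀ P : List Vtx, P ≠ [] → P.Chain' (Adj l) →
      ∃ Q : List Vtx, Q ≠ [] ∧ Q.Chain' (Adj l) ∧
        Q.head? = (P.map (prj ax bx ay by')).head? ∧
        Q.getLast? = (P.map (prj ax bx ay by')).getLast? ∧
        wcost (ecost ch cv cvia) Q ≤ wcost (ecost ch cv cvia) P := by
  intro P
  induction P with
  | nil => intro h; exact absurd rfl h
  | cons x P ih =>
    intro _ hc
    cases P with
    | nil =>
      exact ⟨[prj ax bx ay by' x], List.cons_ne_nil _ _, List.isChain_singleton _,
        rfl, rfl, le_refl _⟩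
    | cons y R =>
      rw [List.Chain', List.isChain_cons_cons] at hc
      obtain ⟨Q, hQne, hQc, hQh, hQl, hQcost⟩ := ih (List.cons_ne_nil _ _) hc.2
      obtain ⟨q, T, rfl⟩ := List.exists_cons_of_ne_nil hQne
      have hq : q = prj ax bx ay by' y := by
        simpa using hQh
      subst hq
      have hpos := edge_pos hch hcv hcvia hc.1
      rcases prj_step hax hay hc.1 with heq | ⟨hadj, hcost⟩
      · refine ⟨prj ax bx ay by' y :: T, List.cons_ne_nil _ _, hQc, by simp [heq], ?_, ?_⟩
        · rw [hQl]
          simp only [List.map_cons, List.getLast?_cons_cons]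
        · simp only [wcost] at hQcost ⊢
          cases T with
          | nil => simp only [wcost] at hQcost ⊢; linarith
          | cons t T' => simp only [wcost] at hQcost ⊢; linarith
      · refine ⟨prj ax bx ay by' x :: prj ax bx ay by' y :: T, List.cons_ne_nil _ _,
          List.isChain_cons_cons.2 ⟨hadj, hQc⟩, by simp, ?_, ?_⟩
        · rw [List.getLast?_cons_cons]
          rw [hQl]
          simp only [List.map_cons, List.getLast?_cons_cons]
        · simp only [wcost] at hQcost ⊢
          linarith

end Aux

/-- For a rectangle `R` on a single layer `ζ`, the minimum over `v ∈ R` of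
`dist (s, v)` is attained at the vertex `r ∈ R` that is coordinatewise closest to `s`. -/
theorem stmt1 (l : ℤ) (hl : 1 ≤ l) (ch cv cvia : ℤ → ℝ)
    (hch : ∀ z, 1 ≤ z → z ≤ l → 0 < ch z)
    (hcv : ∀ z, 1 ≤ z → z ≤ l → 0 < cv z)
    (hcvia : ∀ z, 1 ≤ z → z < l → 0 < cvia z)
    (s : Vtx) (hs : 1 ≤ s.2.2 ∧ s.2.2 ≤ l)
    (ξm ξp υm υp ζ : ℤ) (hξ : ξm ≤ ξp) (hυ : υm ≤ υp) (hζ : 1 ≤ ζ ∧ ζ ≤ l) :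
    IsLeast
      { d : ℝ | ∃ v : Vtx,
          (ξm ≤ v.1 ∧ v.1 ≤ ξp ∧ υm ≤ v.2.1 ∧ v.2.1 ≤ υp ∧ v.2.2 = ζ) ∧
          gdistA (Adj l) (ecost ch cv cvia) s v = d }
      (gdistA (Adj l) (ecost ch cv cvia) s
        (max ξm (min ξp s.1), max υm (min υp s.2.1), ζ)) := by
  set r : Vtx := (max ξm (min ξp s.1), max υm (min υp s.2.1), ζ) with hr
  set ec := ecost ch cv cvia
  -- bounds and nonemptiness facts
  have hbdd : ∀ w : Vtx, BddBelow { m : ℝ | ∃ P, IsWalkA (Adj l) P s w ∧ wcost ec P = m } := by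
    intro w
    exact ⟨0, by rintro m ⟨P, hP, rfl⟩; exact wcost_nonneg hch hcv hcvia P hP.2.1⟩
  have hne : ∀ w : Vtx, 1 ≤ w.2.2 → w.2.2 ≤ l →
      ({ m : ℝ | ∃ P, IsWalkA (Adj l) P s w ∧ wcost ec P = m }).Nonempty := by
    intro w hw1 hw2
    obtain ⟨P, hP⟩ := walk_exists l _ s w rfl hs.1 hs.2 hw1 hw2
    exact ⟨wcost ec P, P, hP, rfl⟩
  have hr1 : r.1 = max ξm (min ξp s.1) := by rw [hr]
  have hr2 : r.2.1 = max υm (min υp s.2.1) := by rw [hr]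
  have hr3 : r.2.2 = ζ := by rw [hr]
  constructor
  · exact ⟨r, ⟨by rw [hr1]; omega, by rw [hr1]; omega, by rw [hr2]; omega,
      by rw [hr2]; omega, hr3⟩, rfl⟩
  · rintro d ⟨v, ⟨hv1, hv2, hv3, hv4, hv5⟩, rfl⟩
    have hvl : 1 ≤ v.2.2 ∧ v.2.2 ≤ l := by rw [hv5]; exact hζ
    apply le_csInf (hne v hvl.1 hvl.2)
    rintro m ⟨P, hP, rfl⟩
    obtain ⟨Q, hQne, hQc, hQh, hQl, hQcost⟩ :=
      prj_walk (ax := min s.1 r.1) (bx := max s.1 r.1) (ay := min s.2.1 r.2.1)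
        (by' := max s.2.1 r.2.1) hch hcv hcvia min_le_max min_le_max P hP.1 hP.2.1
    have hps : prj (min s.1 r.1) (max s.1 r.1) (min s.2.1 r.2.1) (max s.2.1 r.2.1) s = s := by
      have h1 : max (min s.1 r.1) (min (max s.1 r.1) s.1) = s.1 := by omega
      have h2 : max (min s.2.1 r.2.1) (min (max s.2.1 r.2.1) s.2.1) = s.2.1 := by omega
      simp only [prj, h1, h2]
    have hpv : prj (min s.1 r.1) (max s.1 r.1) (min s.2.1 r.2.1) (max s.2.1 r.2.1) v = r := by
      have h1 : max (min s.1 r.1) (min (max s.1 r.1) v.1) = r.1 := by rw [hr1]; omega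
      have h2 : max (min s.2.1 r.2.1) (min (max s.2.1 r.2.1) v.2.1) = r.2.1 := by
        rw [hr2]; omega
      have h3 : v.2.2 = r.2.2 := by rw [hr3, hv5]
      simp only [prj, h1, h2, h3]
    have hQwalk : IsWalkA (Adj l) Q s r := by
      refine ⟨hQne, hQc, ?_, ?_⟩
      · rw [hQh, List.head?_map, hP.2.2.1]
        simp [hps]
      · rw [hQl, List.getLast?_map, hP.2.2.2]
        simp [hpv]
    calc gdistA (Adj l) ec s r ≤ wcost ec Q := csInf_le (hbdd r) ⟨Q, hQwalk, rfl⟩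
      _ ≤ wcost ec P := hQcost
end

section
/- Let c be a simple-model cost function on the infinite grid graph G with l layers, and let s = (x_s, y_s, z_s) and r = (x_r, y_r, z_r) be vertices of G. Then dist_{(G,c)}(s, r) equals the minimum over all pairs of layers z^↔, z^↕ ∈ {1, …, l} of the smaller of the two values c_{z_s, z^↔} + c^↔_{z^↔}·|x_s − x_r| + c_{z^↔, z^↕} + c^↕_{z^↕}·|y_s − y_r| + c_{z^↕, z_r} and c_{z_s, z^↕} + c^↕_{z^↕}·|y_s − y_r| + c_{z^↕, z^↔} + c^↔_{z^↔}·|x_s − x_r| + c_{z^↔, z_r}. -/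
/-- `cviaSum cvia z z'` is the total cost of a stack of vias between layers `z` and `z'`,
i.e. `Σ_{ζ = min z z'}^{max z z' − 1} cvia ζ` (symmetric in `z` and `z'`). -/
noncomputable def cviaSum (cvia : ℤ → ℝ) (z z' : ℤ) : ℝ :=
  ∑ ζ ∈ Finset.Icc (min z z') (max z z' - 1), cvia ζ

/- ===== auxiliary lemmas ===== -/

section Aux

lemma cviaSum_eq_Ico (cvia : ℤ → ℝ) (z z' : ℤ) :
    cviaSum cvia z z' = ∑ ζ ∈ Finset.Ico (min z z') (max z z'), cvia ζ := by
  rw [cviaSum, show Finset.Icc (min z z') (max z z' - 1) = Finset.Ico (min z z') (max z z') from by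
    ext x; simp only [Finset.mem_Icc, Finset.mem_Ico]; omega]

lemma cviaSum_comm' {cvia : ℤ → ℝ} (z z' : ℤ) : cviaSum cvia z z' = cviaSum cvia z' z := by
  rw [cviaSum, cviaSum, min_comm, max_comm]

lemma cviaSum_self' {cvia : ℤ → ℝ} (z : ℤ) : cviaSum cvia z z = 0 := by
  rw [cviaSum_eq_Ico]; simp

lemma cviaSum_succ' {cvia : ℤ → ℝ} (z : ℤ) : cviaSum cvia z (z + 1) = cvia z := by
  rw [cviaSum_eq_Ico, min_eq_left (by omega), max_eq_right (by omega)]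
  rw [show Finset.Ico z (z+1) = {z} from by
    ext x; simp only [Finset.mem_Ico, Finset.mem_singleton]; omega]
  simp

lemma cviaSum_add' {cvia : ℤ → ℝ} {a b c : ℤ} (h1 : a ≤ b) (h2 : b ≤ c) :
    cviaSum cvia a c = cviaSum cvia a b + cviaSum cvia b c := by
  rw [cviaSum_eq_Ico, cviaSum_eq_Ico, cviaSum_eq_Ico,
    min_eq_left (h1.trans h2), max_eq_right (h1.trans h2),
    min_eq_left h1, max_eq_right h1, min_eq_left h2, max_eq_right h2,
    ← Finset.sum_union (Finset.Ico_disjoint_Ico_consecutive a b c),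
    Finset.Ico_union_Ico_eq_Ico h1 h2]

lemma cviaSum_nonneg' {cvia : ℤ → ℝ} {l z z' : ℤ}
    (hcvia : ∀ ζ, 1 ≤ ζ → ζ < l → 0 < cvia ζ)
    (h1 : 1 ≤ z) (h2 : z ≤ l) (h3 : 1 ≤ z') (h4 : z' ≤ l) :
    0 ≤ cviaSum cvia z z' := by
  rw [cviaSum_eq_Ico]
  refine Finset.sum_nonneg fun ζ hζ => ?_
  rw [Finset.mem_Ico] at hζ
  refine (hcvia ζ (by omega) (by omega)).le

lemma cviaSum_triangle' {cvia : ℤ → ℝ} {l a b c : ℤ}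
    (hcvia : ∀ ζ, 1 ≤ ζ → ζ < l → 0 < cvia ζ)
    (ha1 : 1 ≤ a) (ha2 : a ≤ l) (hb1 : 1 ≤ b) (hb2 : b ≤ l) (hc1 : 1 ≤ c) (hc2 : c ≤ l) :
    cviaSum cvia a c ≤ cviaSum cvia a b + cviaSum cvia b c := by
  rcases le_total a c with hac | hac
  · rcases le_total b a with h | h
    · rw [cviaSum_add' h hac, cviaSum_comm' (cvia := cvia) a b]
      have := cviaSum_nonneg' (l := l) hcvia hb1 hb2 ha1 ha2
      linarith
    · rcases le_total b c with h' | h'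
      · rw [cviaSum_add' h h']
      · rw [cviaSum_add' hac h', cviaSum_comm' (cvia := cvia) b c]
        have := cviaSum_nonneg' (l := l) hcvia hc1 hc2 hb1 hb2
        linarith
  · rw [cviaSum_comm' (cvia := cvia) a c, cviaSum_comm' (cvia := cvia) a b,
      cviaSum_comm' (cvia := cvia) b c]
    rcases le_total b c with h | h
    · rw [cviaSum_add' h hac, cviaSum_comm' (cvia := cvia) c b]
      have := cviaSum_nonneg' (l := l) hcvia hb1 hb2 hc1 hc2
      linarith
    · rcases le_total b a with h' | h'
      · rw [cviaSum_add' h h']; linarith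
      · rw [cviaSum_add' hac h', cviaSum_comm' (cvia := cvia) b a]
        have := cviaSum_nonneg' (l := l) hcvia ha1 ha2 hb1 hb2
        linarith

lemma adj_cases {l : ℤ} {u v : Vtx} (h : Adj l u v) :
    (1 ≤ u.2.2 ∧ u.2.2 ≤ l ∧ 1 ≤ v.2.2 ∧ v.2.2 ≤ l) ∧
    ((u.1 ≠ v.1 ∧ u.2.1 = v.2.1 ∧ u.2.2 = v.2.2 ∧ |u.1 - v.1| = 1) ∨
     (u.1 = v.1 ∧ u.2.1 ≠ v.2.1 ∧ u.2.2 = v.2.2 ∧ |u.2.1 - v.2.1| = 1) ∨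
     (u.1 = v.1 ∧ u.2.1 = v.2.1 ∧ |u.2.2 - v.2.2| = 1)) := by
  obtain ⟨h1, h2, h3, h4, h5⟩ := h
  refine ⟨⟨h1, h2, h3, h4⟩, ?_⟩
  simp only [Int.abs_eq_natAbs] at h5 ⊢
  omega

lemma adj_h' {l x y z : ℤ} (d : ℤ) (h1 : 1 ≤ z) (h2 : z ≤ l) (hd : d = 1 ∨ d = -1) :
    Adj l (x, y, z) (x + d, y, z) := by
  refine ⟨h1, h2, h1, h2, ?_⟩
  simp only [Int.abs_eq_natAbs]
  omega

lemma adj_v' {l x y z : ℤ} (d : ℤ) (h1 : 1 ≤ z) (h2 : z ≤ l) (hd : d = 1 ∨ d = -1) :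
    Adj l (x, y, z) (x, y + d, z) := by
  refine ⟨h1, h2, h1, h2, ?_⟩
  simp only [Int.abs_eq_natAbs]
  omega

lemma adj_via' {l x y z : ℤ} (d : ℤ) (h1 : 1 ≤ z) (h2 : z ≤ l) (h3 : 1 ≤ z + d)
    (h4 : z + d ≤ l) (hd : d = 1 ∨ d = -1) : Adj l (x, y, z) (x, y, z + d) := by
  refine ⟨h1, h2, h3, h4, ?_⟩
  simp only [Int.abs_eq_natAbs]
  omega

lemma ecost_h' (ch cv cvia : ℤ → ℝ) {x x' y z : ℤ} (h : x ≠ x') :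
    ecost ch cv cvia (x, y, z) (x', y, z) = ch z := by
  simp [ecost, h]

lemma ecost_v' (ch cv cvia : ℤ → ℝ) {x y y' z : ℤ} (h : y ≠ y') :
    ecost ch cv cvia (x, y, z) (x, y', z) = cv z := by
  simp [ecost, h]

lemma ecost_via' (ch cv cvia : ℤ → ℝ) {x y z z' : ℤ} :
    ecost ch cv cvia (x, y, z) (x, y, z') = cvia (min z z') := by
  simp [ecost]

lemma wcost_append (c : Vtx → Vtx → ℝ) (u : Vtx) :
    ∀ (P Q : List Vtx), P.getLast? = some u → Q.head? = some u →
      wcost c (P ++ Q.tail) = wcost c P + wcost c Q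
  | [], Q, h, _ => by simp at h
  | [a], Q, h, h' => by
    simp only [List.getLast?_singleton, Option.some.injEq] at h
    cases Q with
    | nil => simp at h'
    | cons q t =>
      simp only [List.head?_cons, Option.some.injEq] at h'
      subst h h'
      simp only [List.singleton_append, List.tail_cons]
      cases t with
      | nil => simp [wcost]
      | cons b t' => simp [wcost]
  | a :: b :: P, Q, h, h' => by
    rw [List.getLast?_cons_cons] at h
    have IH := wcost_append c u (b :: P) Q h h'
    show c a b + wcost c ((b :: P) ++ Q.tail) = c a b + wcost c (b :: P) + wcost c Q
    rw [IH]; ring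

lemma walk_trans {A : Vtx → Vtx → Prop} {c : Vtx → Vtx → ℝ} {u v w : Vtx} {a b : ℝ}
    (hP : ∃ P, IsWalkA A P u v ∧ wcost c P = a)
    (hQ : ∃ Q, IsWalkA A Q v w ∧ wcost c Q = b) :
    ∃ R, IsWalkA A R u w ∧ wcost c R = a + b := by
  obtain ⟨P, ⟨hPne, hPch, hPh, hPl⟩, hPc⟩ := hP
  obtain ⟨Q, ⟨hQne, hQch, hQh, hQl⟩, hQc⟩ := hQ
  cases Q with
  | nil => exact absurd rfl hQne
  | cons q t =>
    simp only [List.head?_cons, Option.some.injEq] at hQh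
    subst hQh
    refine ⟨P ++ t, ⟨?_, ?_, ?_, ?_⟩, ?_⟩
    · simp [hPne]
    · rw [List.Chain', List.isChain_append]
      refine ⟨hPch, (List.isChain_cons.mp hQch).2, fun x hx y hy => ?_⟩
      rw [hPl] at hx
      cases hx
      exact (List.isChain_cons.mp hQch).1 y hy
    · cases P with
      | nil => exact absurd rfl hPne
      | cons p t' => simpa using hPh
    · cases t with
      | nil =>
        simp only [List.getLast?_singleton, Option.some.injEq] at hQl
        subst hQl
        simpa using hPl
      | cons b t' =>
        rw [List.getLast?_append_cons]
        rw [← hQl, List.getLast?_cons_cons]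
    · have := wcost_append c q P (q :: t) hPl rfl
      simp only [List.tail_cons] at this
      rw [this, hPc, hQc]

def hW (y z d : ℤ) : ℤ → ℕ → List Vtx
  | x, 0 => [(x, y, z)]
  | x, n + 1 => (x, y, z) :: hW y z d (x + d) n

def vW (x z d : ℤ) : ℤ → ℕ → List Vtx
  | y, 0 => [(x, y, z)]
  | y, n + 1 => (x, y, z) :: vW x z d (y + d) n

def viaW (x y d : ℤ) : ℤ → ℕ → List Vtx
  | z, 0 => [(x, y, z)]
  | z, n + 1 => (x, y, z) :: viaW x y d (z + d) n

lemma hW_cons (y z d : ℤ) (x : ℤ) (n : ℕ) : ∃ t, hW y z d x n = (x, y, z) :: t := by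
  cases n <;> exact ⟨_, rfl⟩

lemma vW_cons (x z d : ℤ) (y : ℤ) (n : ℕ) : ∃ t, vW x z d y n = (x, y, z) :: t := by
  cases n <;> exact ⟨_, rfl⟩

lemma viaW_cons (x y d : ℤ) (z : ℤ) (n : ℕ) : ∃ t, viaW x y d z n = (x, y, z) :: t := by
  cases n <;> exact ⟨_, rfl⟩

section Segs
variable {l : ℤ} (ch cv cvia : ℤ → ℝ)

lemma hW_spec (y z d : ℤ) (h1 : 1 ≤ z) (h2 : z ≤ l) (hd : d = 1 ∨ d = -1) :
    ∀ (n : ℕ) (x : ℤ), IsWalkA (Adj l) (hW y z d x n) (x, y, z) (x + d * n, y, z) ∧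
      wcost (ecost ch cv cvia) (hW y z d x n) = n * ch z
  | 0, x => by
    refine ⟨⟨by simp [hW], by simp [hW, List.Chain'], by simp [hW], by simp [hW]⟩, by simp [hW, wcost]⟩
  | n + 1, x => by
    obtain ⟨IH, IHc⟩ := hW_spec y z d h1 h2 hd n (x + d)
    obtain ⟨t, ht⟩ := hW_cons y z d (x + d) n
    obtain ⟨hne, hch', hhd, hlast⟩ := IH
    constructor
    · refine ⟨by simp [hW], ?_, by simp [hW], ?_⟩
      · show List.Chain' (Adj l) ((x, y, z) :: hW y z d (x + d) n)
        rw [ht, List.Chain', List.isChain_cons_cons]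
        exact ⟨adj_h' d h1 h2 hd, ht ▸ hch'⟩
      · show ((x, y, z) :: hW y z d (x + d) n).getLast? = _
        rw [ht, List.getLast?_cons_cons, ← ht, hlast]
        congr 2
        push_cast
        ring
    · show wcost (ecost ch cv cvia) ((x, y, z) :: hW y z d (x + d) n) = _
      rw [ht]
      show ecost ch cv cvia (x, y, z) (x + d, y, z) +
        wcost (ecost ch cv cvia) ((x + d, y, z) :: t) = _
      rw [← ht, ecost_h' ch cv cvia (by omega), IHc]
      push_cast
      ring

lemma vW_spec (x z d : ℤ) (h1 : 1 ≤ z) (h2 : z ≤ l) (hd : d = 1 ∨ d = -1) :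
    ∀ (n : ℕ) (y : ℤ), IsWalkA (Adj l) (vW x z d y n) (x, y, z) (x, y + d * n, z) ∧
      wcost (ecost ch cv cvia) (vW x z d y n) = n * cv z
  | 0, y => by
    refine ⟨⟨by simp [vW], by simp [vW, List.Chain'], by simp [vW], by simp [vW]⟩, by simp [vW, wcost]⟩
  | n + 1, y => by
    obtain ⟨IH, IHc⟩ := vW_spec x z d h1 h2 hd n (y + d)
    obtain ⟨t, ht⟩ := vW_cons x z d (y + d) n
    obtain ⟨hne, hch', hhd, hlast⟩ := IH
    constructor
    · refine ⟨by simp [vW], ?_, by simp [vW], ?_⟩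
      · show List.Chain' (Adj l) ((x, y, z) :: vW x z d (y + d) n)
        rw [ht, List.Chain', List.isChain_cons_cons]
        exact ⟨adj_v' d h1 h2 hd, ht ▸ hch'⟩
      · show ((x, y, z) :: vW x z d (y + d) n).getLast? = _
        rw [ht, List.getLast?_cons_cons, ← ht, hlast]
        congr 3
        push_cast
        ring
    · show wcost (ecost ch cv cvia) ((x, y, z) :: vW x z d (y + d) n) = _
      rw [ht]
      show ecost ch cv cvia (x, y, z) (x, y + d, z) +
        wcost (ecost ch cv cvia) ((x, y + d, z) :: t) = _
      rw [← ht, ecost_v' ch cv cvia (by omega), IHc]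
      push_cast
      ring

lemma viaW_spec (x y d : ℤ) (hd : d = 1 ∨ d = -1) :
    ∀ (n : ℕ) (z : ℤ), 1 ≤ z → z ≤ l → 1 ≤ z + d * n → z + d * n ≤ l →
      IsWalkA (Adj l) (viaW x y d z n) (x, y, z) (x, y, z + d * n) ∧
      wcost (ecost ch cv cvia) (viaW x y d z n) = cviaSum cvia z (z + d * n)
  | 0, z, hz1, hz2, hz3, hz4 => by
    have h0 : cviaSum cvia z z = 0 := cviaSum_self' z
    exact ⟨⟨by simp [viaW], by simp [viaW, List.Chain'], by simp [viaW], by simp [viaW]⟩,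
      by simp [viaW, wcost, h0]⟩
  | n + 1, z, hz1, hz2, hz3, hz4 => by
    have hmid1 : 1 ≤ z + d := by rcases hd with rfl | rfl <;> push_cast at hz3 hz4 ⊢ <;> omega
    have hmid2 : z + d ≤ l := by rcases hd with rfl | rfl <;> push_cast at hz3 hz4 ⊢ <;> omega
    have hend1 : 1 ≤ (z + d) + d * n := by push_cast at hz3 ⊢; rcases hd with rfl | rfl <;> omega
    have hend2 : (z + d) + d * n ≤ l := by push_cast at hz4 ⊢; rcases hd with rfl | rfl <;> omega
    obtain ⟨IH, IHc⟩ := viaW_spec x y d hd n (z + d) hmid1 hmid2 hend1 hend2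
    obtain ⟨t, ht⟩ := viaW_cons x y d (z + d) n
    obtain ⟨hne, hch', hhd, hlast⟩ := IH
    constructor
    · refine ⟨by simp [viaW], ?_, by simp [viaW], ?_⟩
      · show List.Chain' (Adj l) ((x, y, z) :: viaW x y d (z + d) n)
        rw [ht, List.Chain', List.isChain_cons_cons]
        exact ⟨adj_via' d hz1 hz2 hmid1 hmid2 hd, ht ▸ hch'⟩
      · show ((x, y, z) :: viaW x y d (z + d) n).getLast? = _
        rw [ht, List.getLast?_cons_cons, ← ht, hlast]
        congr 3
        push_cast
        ring
    · show wcost (ecost ch cv cvia) ((x, y, z) :: viaW x y d (z + d) n) = _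
      rw [ht]
      show ecost ch cv cvia (x, y, z) (x, y, z + d) +
        wcost (ecost ch cv cvia) ((x, y, z + d) :: t) = _
      rw [← ht, ecost_via' ch cv cvia, IHc]
      push_cast
      rw [show z + d * ((n : ℤ) + 1) = (z + d) + d * n from by ring]
      rcases hd with rfl | rfl
      · rw [min_eq_left (by omega), ← cviaSum_succ' (cvia := cvia) z,
          ← cviaSum_add' (by omega) (by push_cast at hend1 ⊢; omega)]
      · rw [min_eq_right (by omega)]
        rw [cviaSum_comm' (cvia := cvia) z, cviaSum_comm' (cvia := cvia) (z + -1),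
          cviaSum_add' (a := z + -1 + -1 * n) (b := z + -1) (c := z)
            (by push_cast; omega) (by omega)]
        rw [show cviaSum cvia (z + -1) z = cvia (z + -1) from by
          have h := cviaSum_succ' (cvia := cvia) (z + -1)
          rwa [show z + -1 + 1 = z from by ring] at h]
        ring

lemma abs_cast_natAbs (a b : ℤ) : |(a : ℝ) - (b : ℝ)| = ((b - a).natAbs : ℝ) := by
  rw [Nat.cast_natAbs]
  push_cast
  rw [abs_sub_comm]

lemma hwalk_exists (x x' y z : ℤ) (h1 : 1 ≤ z) (h2 : z ≤ l) :
    ∃ P, IsWalkA (Adj l) P (x, y, z) (x', y, z) ∧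
      wcost (ecost ch cv cvia) P = ch z * |(x : ℝ) - (x' : ℝ)| := by
  set d : ℤ := if x ≤ x' then 1 else -1 with hdd
  have hd : d = 1 ∨ d = -1 := by unfold d; split <;> simp
  set n : ℕ := (x' - x).natAbs with hnn
  have hx' : x + d * n = x' := by unfold d n; split <;> omega
  obtain ⟨hw, hc⟩ := hW_spec ch cv cvia y z d h1 h2 hd n x
  rw [hx'] at hw
  refine ⟨_, hw, ?_⟩
  rw [hc, abs_cast_natAbs]
  ring

lemma vwalk_exists (x y y' z : ℤ) (h1 : 1 ≤ z) (h2 : z ≤ l) :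
    ∃ P, IsWalkA (Adj l) P (x, y, z) (x, y', z) ∧
      wcost (ecost ch cv cvia) P = cv z * |(y : ℝ) - (y' : ℝ)| := by
  set d : ℤ := if y ≤ y' then 1 else -1 with hdd
  have hd : d = 1 ∨ d = -1 := by unfold d; split <;> simp
  set n : ℕ := (y' - y).natAbs with hnn
  have hy' : y + d * n = y' := by unfold d n; split <;> omega
  obtain ⟨hw, hc⟩ := vW_spec ch cv cvia x z d h1 h2 hd n y
  rw [hy'] at hw
  refine ⟨_, hw, ?_⟩
  rw [hc, abs_cast_natAbs]
  ring

lemma viawalk_exists (x y z z' : ℤ) (h1 : 1 ≤ z) (h2 : z ≤ l) (h3 : 1 ≤ z') (h4 : z' ≤ l) :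
    ∃ P, IsWalkA (Adj l) P (x, y, z) (x, y, z') ∧
      wcost (ecost ch cv cvia) P = cviaSum cvia z z' := by
  set d : ℤ := if z ≤ z' then 1 else -1 with hdd
  have hd : d = 1 ∨ d = -1 := by unfold d; split <;> simp
  set n : ℕ := (z' - z).natAbs with hnn
  have hz' : z + d * n = z' := by unfold d n; split <;> omega
  obtain ⟨hw, hc⟩ := viaW_spec ch cv cvia x y d hd n z h1 h2 (hz' ▸ h3) (hz' ▸ h4)
  rw [hz'] at hw hc
  exact ⟨_, hw, hc⟩

end Segs

noncomputable def e1 (ch cv cvia : ℤ → ℝ) (r u : Vtx) (zh zv : ℤ) : ℝ :=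
  cviaSum cvia u.2.2 zh + ch zh * |(u.1 : ℝ) - (r.1 : ℝ)| +
    cviaSum cvia zh zv + cv zv * |(u.2.1 : ℝ) - (r.2.1 : ℝ)| + cviaSum cvia zv r.2.2

noncomputable def e2 (ch cv cvia : ℤ → ℝ) (r u : Vtx) (zh zv : ℤ) : ℝ :=
  cviaSum cvia u.2.2 zv + cv zv * |(u.2.1 : ℝ) - (r.2.1 : ℝ)| +
    cviaSum cvia zv zh + ch zh * |(u.1 : ℝ) - (r.1 : ℝ)| + cviaSum cvia zh r.2.2

lemma abs_step (x x' b : ℤ) (hxx : |x - x'| = 1) :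
    |(x : ℝ) - (b : ℝ)| ≤ |(x' : ℝ) - (b : ℝ)| + 1 := by
  have h1 : |(x : ℝ) - (x' : ℝ)| = 1 := by
    rw [show (x : ℝ) - (x' : ℝ) = ((x - x' : ℤ) : ℝ) from by push_cast; ring,
      ← Int.cast_abs, hxx]
    norm_num
  have := abs_sub_le ((x : ℝ)) ((x' : ℝ)) ((b : ℝ))
  linarith

section Steps
set_option linter.unusedSectionVars false
variable {l : ℤ} {ch cv cvia : ℤ → ℝ}
variable (hch : ∀ z, 1 ≤ z → z ≤ l → 0 < ch z)
    (hcv : ∀ z, 1 ≤ z → z ≤ l → 0 < cv z)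
    (hcvia : ∀ z, 1 ≤ z → z < l → 0 < cvia z)
    (r : Vtx) (hr1 : 1 ≤ r.2.2) (hr2 : r.2.2 ≤ l)

include hch hcv hcvia hr1 hr2

lemma step_h {x x' y z zh zv : ℤ}
    (hz1 : 1 ≤ z) (hz2 : z ≤ l) (hzh1 : 1 ≤ zh) (hzh2 : zh ≤ l)
    (hzv1 : 1 ≤ zv) (hzv2 : zv ≤ l) (hxx : |x - x'| = 1) :
    ∃ zh' zv', (1 ≤ zh' ∧ zh' ≤ l ∧ 1 ≤ zv' ∧ zv' ≤ l) ∧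
      min (e1 ch cv cvia r (x, y, z) zh' zv') (e2 ch cv cvia r (x, y, z) zh' zv') ≤
        ch z + min (e1 ch cv cvia r (x', y, z) zh zv) (e2 ch cv cvia r (x', y, z) zh zv) := by
  have habs := abs_step x x' r.1 hxx
  have hX' : (0:ℝ) ≤ |(x' : ℝ) - r.1| := abs_nonneg _
  have hchz := hch z hz1 hz2
  have hchzh := hch zh hzh1 hzh2
  rcases le_total (ch zh) (ch z) with hle | hle
  · refine ⟨zh, zv, ⟨hzh1, hzh2, hzv1, hzv2⟩, ?_⟩
    have k1 : ch zh * |(x : ℝ) - r.1| ≤ ch zh * (|(x' : ℝ) - r.1| + 1) :=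
      mul_le_mul_of_nonneg_left habs hchzh.le
    have h1 : e1 ch cv cvia r (x, y, z) zh zv ≤ ch z + e1 ch cv cvia r (x', y, z) zh zv := by
      simp only [e1]; nlinarith
    have h2 : e2 ch cv cvia r (x, y, z) zh zv ≤ ch z + e2 ch cv cvia r (x', y, z) zh zv := by
      simp only [e2]; nlinarith
    exact (min_le_min h1 h2).trans_eq (min_add_add_left _ _ _)
  · refine ⟨z, zv, ⟨hz1, hz2, hzv1, hzv2⟩, ?_⟩
    have k1 : ch z * |(x : ℝ) - r.1| ≤ ch z * (|(x' : ℝ) - r.1| + 1) :=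
      mul_le_mul_of_nonneg_left habs hchz.le
    have k2 : ch z * |(x' : ℝ) - r.1| ≤ ch zh * |(x' : ℝ) - r.1| :=
      mul_le_mul_of_nonneg_right hle hX'
    have hA : e1 ch cv cvia r (x, y, z) z zv ≤ ch z + e1 ch cv cvia r (x', y, z) zh zv := by
      simp only [e1]
      have t1 := cviaSum_triangle' (cvia := cvia) hcvia hz1 hz2 hzh1 hzh2 hzv1 hzv2
      have t2 := cviaSum_self' (cvia := cvia) z
      nlinarith
    have hB : e1 ch cv cvia r (x, y, z) z zv ≤ ch z + e2 ch cv cvia r (x', y, z) zh zv := by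
      simp only [e1, e2]
      have t1 := cviaSum_triangle' (cvia := cvia) hcvia hzv1 hzv2 hzh1 hzh2 hr1 hr2
      have t2 := cviaSum_self' (cvia := cvia) z
      nlinarith
    exact (min_le_left _ _).trans ((le_min hA hB).trans_eq (min_add_add_left _ _ _))

lemma step_v {x y y' z zh zv : ℤ}
    (hz1 : 1 ≤ z) (hz2 : z ≤ l) (hzh1 : 1 ≤ zh) (hzh2 : zh ≤ l)
    (hzv1 : 1 ≤ zv) (hzv2 : zv ≤ l) (hyy : |y - y'| = 1) :
    ∃ zh' zv', (1 ≤ zh' ∧ zh' ≤ l ∧ 1 ≤ zv' ∧ zv' ≤ l) ∧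
      min (e1 ch cv cvia r (x, y, z) zh' zv') (e2 ch cv cvia r (x, y, z) zh' zv') ≤
        cv z + min (e1 ch cv cvia r (x, y', z) zh zv) (e2 ch cv cvia r (x, y', z) zh zv) := by
  have habs := abs_step y y' r.2.1 hyy
  have hY' : (0:ℝ) ≤ |(y' : ℝ) - r.2.1| := abs_nonneg _
  have hcvz := hcv z hz1 hz2
  have hcvzv := hcv zv hzv1 hzv2
  rcases le_total (cv zv) (cv z) with hle | hle
  · refine ⟨zh, zv, ⟨hzh1, hzh2, hzv1, hzv2⟩, ?_⟩
    have k1 : cv zv * |(y : ℝ) - r.2.1| ≤ cv zv * (|(y' : ℝ) - r.2.1| + 1) :=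
      mul_le_mul_of_nonneg_left habs hcvzv.le
    have h1 : e1 ch cv cvia r (x, y, z) zh zv ≤ cv z + e1 ch cv cvia r (x, y', z) zh zv := by
      simp only [e1]; nlinarith
    have h2 : e2 ch cv cvia r (x, y, z) zh zv ≤ cv z + e2 ch cv cvia r (x, y', z) zh zv := by
      simp only [e2]; nlinarith
    exact (min_le_min h1 h2).trans_eq (min_add_add_left _ _ _)
  · refine ⟨zh, z, ⟨hzh1, hzh2, hz1, hz2⟩, ?_⟩
    have k1 : cv z * |(y : ℝ) - r.2.1| ≤ cv z * (|(y' : ℝ) - r.2.1| + 1) :=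
      mul_le_mul_of_nonneg_left habs hcvz.le
    have k2 : cv z * |(y' : ℝ) - r.2.1| ≤ cv zv * |(y' : ℝ) - r.2.1| :=
      mul_le_mul_of_nonneg_right hle hY'
    have hA : e2 ch cv cvia r (x, y, z) zh z ≤ cv z + e2 ch cv cvia r (x, y', z) zh zv := by
      simp only [e2]
      have t1 := cviaSum_triangle' (cvia := cvia) hcvia hz1 hz2 hzv1 hzv2 hzh1 hzh2
      have t2 := cviaSum_self' (cvia := cvia) z
      nlinarith
    have hB : e2 ch cv cvia r (x, y, z) zh z ≤ cv z + e1 ch cv cvia r (x, y', z) zh zv := by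
      simp only [e1, e2]
      have t1 := cviaSum_triangle' (cvia := cvia) hcvia hzh1 hzh2 hzv1 hzv2 hr1 hr2
      have t2 := cviaSum_self' (cvia := cvia) z
      nlinarith
    exact (min_le_right _ _).trans ((le_min hB hA).trans_eq (min_add_add_left _ _ _))

lemma cviaSum_adj {z z' : ℤ} (hzz : |z - z'| = 1) :
    cvia (min z z') = cviaSum cvia z z' := by
  rcases abs_eq (by norm_num : (0:ℤ) ≤ 1) |>.mp hzz with h | h
  · have : z' = z - 1 := by omega
    subst this
    rw [min_eq_right (by omega), cviaSum_comm']
    have h := cviaSum_succ' (cvia := cvia) (z - 1)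
    rw [show z - 1 + 1 = z from by ring] at h
    exact h.symm
  · have : z' = z + 1 := by omega
    subst this
    rw [min_eq_left (by omega), cviaSum_succ']

lemma step_via {x y z z' zh zv : ℤ}
    (hz1 : 1 ≤ z) (hz2 : z ≤ l) (hz1' : 1 ≤ z') (hz2' : z' ≤ l)
    (hzh1 : 1 ≤ zh) (hzh2 : zh ≤ l) (hzv1 : 1 ≤ zv) (hzv2 : zv ≤ l) :
      min (e1 ch cv cvia r (x, y, z) zh zv) (e2 ch cv cvia r (x, y, z) zh zv) ≤
        cviaSum cvia z z' +
          min (e1 ch cv cvia r (x, y, z') zh zv) (e2 ch cv cvia r (x, y, z') zh zv) := by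
  have h1 : e1 ch cv cvia r (x, y, z) zh zv ≤
      cviaSum cvia z z' + e1 ch cv cvia r (x, y, z') zh zv := by
    simp only [e1]
    have t1 := cviaSum_triangle' (cvia := cvia) hcvia hz1 hz2 hz1' hz2' hzh1 hzh2
    linarith
  have h2 : e2 ch cv cvia r (x, y, z) zh zv ≤
      cviaSum cvia z z' + e2 ch cv cvia r (x, y, z') zh zv := by
    simp only [e2]
    have t1 := cviaSum_triangle' (cvia := cvia) hcvia hz1 hz2 hz1' hz2' hzv1 hzv2
    linarith
  exact (min_le_min h1 h2).trans_eq (min_add_add_left _ _ _)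

end Steps

noncomputable def Df (l : ℤ) (ch cv cvia : ℤ → ℝ) (r u : Vtx) : ℝ :=
  if h : 1 ≤ l then
    ((Finset.Icc 1 l) ×ˢ (Finset.Icc 1 l)).inf'
      ⟨(1, 1), by simp only [Finset.mem_product, Finset.mem_Icc]; omega⟩
      (fun p => min (e1 ch cv cvia r u p.1 p.2) (e2 ch cv cvia r u p.1 p.2))
  else 0

section DfSec
set_option linter.unusedSectionVars false
variable {l : ℤ} {ch cv cvia : ℤ → ℝ} {r : Vtx}

lemma Df_le (hl : 1 ≤ l) (u : Vtx) {zh zv : ℤ}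
    (h1 : 1 ≤ zh) (h2 : zh ≤ l) (h3 : 1 ≤ zv) (h4 : zv ≤ l) :
    Df l ch cv cvia r u ≤ min (e1 ch cv cvia r u zh zv) (e2 ch cv cvia r u zh zv) := by
  rw [Df, dif_pos hl]
  exact Finset.inf'_le
    (fun p : ℤ × ℤ => min (e1 ch cv cvia r u p.1 p.2) (e2 ch cv cvia r u p.1 p.2))
    (b := (zh, zv)) (by simp only [Finset.mem_product, Finset.mem_Icc]; omega)

lemma Df_attain (hl : 1 ≤ l) (u : Vtx) :
    ∃ zh zv : ℤ, (1 ≤ zh ∧ zh ≤ l ∧ 1 ≤ zv ∧ zv ≤ l) ∧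
      Df l ch cv cvia r u = min (e1 ch cv cvia r u zh zv) (e2 ch cv cvia r u zh zv) := by
  rw [Df, dif_pos hl]
  obtain ⟨p, hp, he⟩ := Finset.exists_mem_eq_inf'
    (⟨(1, 1), by simp only [Finset.mem_product, Finset.mem_Icc]; omega⟩ :
      ((Finset.Icc 1 l) ×ˢ (Finset.Icc 1 l)).Nonempty)
    (fun p : ℤ × ℤ => min (e1 ch cv cvia r u p.1 p.2) (e2 ch cv cvia r u p.1 p.2))
  simp only [Finset.mem_product, Finset.mem_Icc] at hp
  exact ⟨p.1, p.2, ⟨hp.1.1, hp.1.2, hp.2.1, hp.2.2⟩, he⟩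

variable (hl : 1 ≤ l)
    (hch : ∀ z, 1 ≤ z → z ≤ l → 0 < ch z)
    (hcv : ∀ z, 1 ≤ z → z ≤ l → 0 < cv z)
    (hcvia : ∀ z, 1 ≤ z → z < l → 0 < cvia z)
    (hr1 : 1 ≤ r.2.2) (hr2 : r.2.2 ≤ l)

include hl hch hcv hcvia hr1 hr2

lemma Df_step {u v : Vtx} (huv : Adj l u v) :
    Df l ch cv cvia r u ≤ ecost ch cv cvia u v + Df l ch cv cvia r v := by
  obtain ⟨zh, zv, ⟨b1, b2, b3, b4⟩, hDv⟩ := Df_attain (r := r) hl v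
  obtain ⟨⟨hu1, hu2, hv1, hv2⟩, hcase⟩ := adj_cases huv
  obtain ⟨xu, yu, zu⟩ := u
  obtain ⟨xv, yv, zw⟩ := v
  simp only at hu1 hu2 hv1 hv2 hcase hDv
  rcases hcase with ⟨hne, hy, hz, habs⟩ | ⟨hx, hne, hz, habs⟩ | ⟨hx, hy, habs⟩
  · subst hy hz
    obtain ⟨zh', zv', ⟨c1, c2, c3, c4⟩, hstep⟩ :=
      step_h hch hcv hcvia r hr1 hr2 hu1 hu2 b1 b2 b3 b4 habs
    calc Df l ch cv cvia r (xu, yu, zu)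
        ≤ min (e1 ch cv cvia r (xu, yu, zu) zh' zv') (e2 ch cv cvia r (xu, yu, zu) zh' zv') :=
          Df_le hl _ c1 c2 c3 c4
      _ ≤ ch zu + min (e1 ch cv cvia r (xv, yu, zu) zh zv)
            (e2 ch cv cvia r (xv, yu, zu) zh zv) := hstep
      _ = _ := by rw [ecost_h' ch cv cvia hne, hDv]
  · subst hx hz
    obtain ⟨zh', zv', ⟨c1, c2, c3, c4⟩, hstep⟩ :=
      step_v hch hcv hcvia r hr1 hr2 hu1 hu2 b1 b2 b3 b4 habs
    calc Df l ch cv cvia r (xu, yu, zu)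
        ≤ min (e1 ch cv cvia r (xu, yu, zu) zh' zv') (e2 ch cv cvia r (xu, yu, zu) zh' zv') :=
          Df_le hl _ c1 c2 c3 c4
      _ ≤ cv zu + min (e1 ch cv cvia r (xu, yv, zu) zh zv)
            (e2 ch cv cvia r (xu, yv, zu) zh zv) := hstep
      _ = _ := by rw [ecost_v' ch cv cvia hne, hDv]
  · subst hx hy
    calc Df l ch cv cvia r (xu, yu, zu)
        ≤ min (e1 ch cv cvia r (xu, yu, zu) zh zv) (e2 ch cv cvia r (xu, yu, zu) zh zv) :=
          Df_le hl _ b1 b2 b3 b4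
      _ ≤ cviaSum cvia zu zw + min (e1 ch cv cvia r (xu, yu, zw) zh zv)
            (e2 ch cv cvia r (xu, yu, zw) zh zv) :=
          step_via hch hcv hcvia r hr1 hr2 hu1 hu2 hv1 hv2 b1 b2 b3 b4
      _ = _ := by rw [ecost_via' ch cv cvia, cviaSum_adj hch hcv hcvia r hr1 hr2 habs, hDv]

lemma Df_r_nonpos : Df l ch cv cvia r r ≤ 0 := by
  have h := Df_le (ch := ch) (cv := cv) (cvia := cvia) (r := r) hl r hr1 hr2 hr1 hr2
  have h1 : e1 ch cv cvia r r r.2.2 r.2.2 = 0 := by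
    simp [e1, cviaSum_self']
  have h2 : e2 ch cv cvia r r r.2.2 r.2.2 = 0 := by
    simp [e2, cviaSum_self']
  rw [h1, h2] at h
  simpa using h

lemma wcost_ge :
    ∀ P : List Vtx, P.Chain' (Adj l) → P.getLast? = some r → ∀ u, P.head? = some u →
      Df l ch cv cvia r u ≤ wcost (ecost ch cv cvia) P
  | [], _, hlast, _, _ => by simp at hlast
  | [a], _, hlast, u, hhead => by
    simp only [List.getLast?_singleton, Option.some.injEq] at hlast
    simp only [List.head?_cons, Option.some.injEq] at hhead
    have h : Df l ch cv cvia r u ≤ 0 := by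
      rw [← hhead, hlast]
      exact Df_r_nonpos hl hch hcv hcvia hr1 hr2
    simpa [wcost] using h
  | a :: b :: P, hchain, hlast, u, hhead => by
    simp only [List.head?_cons, Option.some.injEq] at hhead
    rw [List.Chain', List.isChain_cons_cons] at hchain
    rw [List.getLast?_cons_cons] at hlast
    have IH := wcost_ge (b :: P) hchain.2 hlast b rfl
    have hstep := Df_step hl hch hcv hcvia hr1 hr2 hchain.1
    show Df l ch cv cvia r u ≤ ecost ch cv cvia a b + wcost (ecost ch cv cvia) (b :: P)
    rw [← hhead]
    linarith

end DfSec
section Walks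
variable {l : ℤ} (ch cv cvia : ℤ → ℝ) (s r : Vtx)
    (hs1 : 1 ≤ s.2.2) (hs2 : s.2.2 ≤ l) (hr1 : 1 ≤ r.2.2) (hr2 : r.2.2 ≤ l)
    {zh zv : ℤ} (hzh1 : 1 ≤ zh) (hzh2 : zh ≤ l) (hzv1 : 1 ≤ zv) (hzv2 : zv ≤ l)

include hs1 hs2 hr1 hr2 hzh1 hzh2 hzv1 hzv2 in
lemma walk_e1 : ∃ P, IsWalkA (Adj l) P s r ∧
    wcost (ecost ch cv cvia) P = e1 ch cv cvia r s zh zv := by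
  have W1 := viawalk_exists ch cv cvia s.1 s.2.1 s.2.2 zh hs1 hs2 hzh1 hzh2
  have W2 := hwalk_exists ch cv cvia s.1 r.1 s.2.1 zh hzh1 hzh2
  have W3 := viawalk_exists ch cv cvia r.1 s.2.1 zh zv hzh1 hzh2 hzv1 hzv2
  have W4 := vwalk_exists ch cv cvia r.1 s.2.1 r.2.1 zv hzv1 hzv2
  have W5 := viawalk_exists ch cv cvia r.1 r.2.1 zv r.2.2 hzv1 hzv2 hr1 hr2
  exact walk_trans (walk_trans (walk_trans (walk_trans W1 W2) W3) W4) W5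

include hs1 hs2 hr1 hr2 hzh1 hzh2 hzv1 hzv2 in
lemma walk_e2 : ∃ P, IsWalkA (Adj l) P s r ∧
    wcost (ecost ch cv cvia) P = e2 ch cv cvia r s zh zv := by
  have W1 := viawalk_exists ch cv cvia s.1 s.2.1 s.2.2 zv hs1 hs2 hzv1 hzv2
  have W2 := vwalk_exists ch cv cvia s.1 s.2.1 r.2.1 zv hzv1 hzv2
  have W3 := viawalk_exists ch cv cvia s.1 r.2.1 zv zh hzv1 hzv2 hzh1 hzh2
  have W4 := hwalk_exists ch cv cvia s.1 r.1 r.2.1 zh hzh1 hzh2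
  have W5 := viawalk_exists ch cv cvia r.1 r.2.1 zh r.2.2 hzh1 hzh2 hr1 hr2
  exact walk_trans (walk_trans (walk_trans (walk_trans W1 W2) W3) W4) W5

end Walks

/-- `dist (s, r)` equals the minimum, over all pairs of layers
`z↔, z↕ ∈ {1, …, l}`, of the smaller of the two values
`c_{z_s,z↔} + c↔_{z↔}·|x_s − x_r| + c_{z↔,z↕} + c↕_{z↕}·|y_s − y_r| + c_{z↕,z_r}` and
`c_{z_s,z↕} + c↕_{z↕}·|y_s − y_r| + c_{z↕,z↔} + c↔_{z↔}·|x_s − x_r| + c_{z↔,z_r}`. -/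
theorem stmt2 (l : ℤ) (hl : 1 ≤ l) (ch cv cvia : ℤ → ℝ)
    (hch : ∀ z, 1 ≤ z → z ≤ l → 0 < ch z)
    (hcv : ∀ z, 1 ≤ z → z ≤ l → 0 < cv z)
    (hcvia : ∀ z, 1 ≤ z → z < l → 0 < cvia z)
    (s r : Vtx) (hs : 1 ≤ s.2.2 ∧ s.2.2 ≤ l) (hr : 1 ≤ r.2.2 ∧ r.2.2 ≤ l) :
    IsLeast
      { m : ℝ | ∃ zh zv : ℤ, 1 ≤ zh ∧ zh ≤ l ∧ 1 ≤ zv ∧ zv ≤ l ∧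
          m = min
            (cviaSum cvia s.2.2 zh + ch zh * |(s.1 : ℝ) - (r.1 : ℝ)| +
              cviaSum cvia zh zv + cv zv * |(s.2.1 : ℝ) - (r.2.1 : ℝ)| +
              cviaSum cvia zv r.2.2)
            (cviaSum cvia s.2.2 zv + cv zv * |(s.2.1 : ℝ) - (r.2.1 : ℝ)| +
              cviaSum cvia zv zh + ch zh * |(s.1 : ℝ) - (r.1 : ℝ)| +
              cviaSum cvia zh r.2.2) }
      (gdistA (Adj l) (ecost ch cv cvia) s r) := by
  obtain ⟨hs1, hs2⟩ := hs
  obtain ⟨hr1, hr2⟩ := hr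
  have hlow : ∀ m ∈ {m : ℝ | ∃ P, IsWalkA (Adj l) P s r ∧ wcost (ecost ch cv cvia) P = m},
      Df l ch cv cvia r s ≤ m := by
    rintro m ⟨P, ⟨hne, hchain, hhd, hlst⟩, rfl⟩
    exact wcost_ge hl hch hcv hcvia hr1 hr2 P hchain hlst s hhd
  obtain ⟨zh0, zv0, ⟨b1, b2, b3, b4⟩, hDf⟩ := Df_attain (r := r) hl s
  have hmem : Df l ch cv cvia r s ∈
      {m : ℝ | ∃ P, IsWalkA (Adj l) P s r ∧ wcost (ecost ch cv cvia) P = m} := by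
    rcases le_total (e1 ch cv cvia r s zh0 zv0) (e2 ch cv cvia r s zh0 zv0) with h | h
    · obtain ⟨P, hP, hc⟩ := walk_e1 ch cv cvia s r hs1 hs2 hr1 hr2 b1 b2 b3 b4
      exact ⟨P, hP, by rw [hc, hDf, min_eq_left h]⟩
    · obtain ⟨P, hP, hc⟩ := walk_e2 ch cv cvia s r hs1 hs2 hr1 hr2 b1 b2 b3 b4
      exact ⟨P, hP, by rw [hc, hDf, min_eq_right h]⟩
  have hgd : gdistA (Adj l) (ecost ch cv cvia) s r = Df l ch cv cvia r s :=
    IsLeast.csInf_eq ⟨hmem, hlow⟩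
  rw [hgd]
  constructor
  · refine ⟨zh0, zv0, b1, b2, b3, b4, ?_⟩
    rw [hDf]
    simp only [e1, e2]
  · rintro m ⟨zh, zv, h1, h2, h3, h4, rfl⟩
    exact Df_le hl s h1 h2 h3 h4
end Aux
end

section
/- Let c be a simple-model cost function on the infinite grid graph G with l layers, let r = (x_r, y_r, z_r) and s = (x_s, y_s, z_s) be vertices of G, and for z ∈ {1, …, l} let v_z = (x_s, y_r, z). For each z, let d̄_z denote the minimum cost of a path from r to v_z in the subgraph of G obtained by deleting all horizontal edges on layers 1, …, z−1. Then d̄_l = c_{z_r, l} + c^↔_l·|x_s − x_r|, and for every z ∈ {1, …, l−1}, d̄_z = min{ c_{z_r, z} + c^↔_z·|x_s − x_r|, d̄_{z+1} + c_{z, z+1} }. -/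
/-- Adjacency in the subgraph of the grid graph with `l` layers obtained by deleting all
horizontal edges on the layers `1, …, z₀ − 1`. -/
def AdjNH (l z₀ : ℤ) (u v : Vtx) : Prop :=
  Adj l u v ∧ (u.1 ≠ v.1 → z₀ ≤ u.2.2)

namespace Stmt3Aux

noncomputable def S (cvia : ℤ → ℝ) (z : ℤ) : ℝ := ∑ ζ ∈ Finset.Ioc 0 (z - 1), cvia ζ

lemma sum_Ioc_cat (f : ℤ → ℝ) {a b c : ℤ} (h1 : a ≤ b) (h2 : b ≤ c) :
    ∑ i ∈ Finset.Ioc a b, f i + ∑ i ∈ Finset.Ioc b c, f i = ∑ i ∈ Finset.Ioc a c, f i := by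
  rw [← Finset.sum_union (by rw [Finset.disjoint_left]; intro x hx hx'; simp at hx hx'; omega),
    Finset.Ioc_union_Ioc_eq_Ioc h1 h2]

lemma cviaSum_comm (cvia : ℤ → ℝ) (a b : ℤ) : cviaSum cvia a b = cviaSum cvia b a := by
  unfold cviaSum; rw [min_comm, max_comm]

lemma cviaSum_self (cvia : ℤ → ℝ) (a : ℤ) : cviaSum cvia a a = 0 := by
  unfold cviaSum
  rw [min_self, max_self, Finset.Icc_eq_empty (by omega), Finset.sum_empty]

lemma cviaSum_of_le (cvia : ℤ → ℝ) {a b : ℤ} (h1 : 1 ≤ a) (h : a ≤ b) :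
    cviaSum cvia a b = S cvia b - S cvia a := by
  unfold cviaSum S
  rw [min_eq_left h, max_eq_right h, eq_sub_iff_add_eq, add_comm,
    show Finset.Icc a (b - 1) = Finset.Ioc (a - 1) (b - 1) by ext x; simp]
  exact sum_Ioc_cat cvia (by omega) (by omega)

lemma S_mono {l : ℤ} (cvia : ℤ → ℝ) (hcvia : ∀ z, 1 ≤ z → z < l → 0 < cvia z)
    {a b : ℤ} (h1 : 1 ≤ a) (h : a ≤ b) (hb : b ≤ l) : S cvia a ≤ S cvia b := by
  unfold S
  have key := sum_Ioc_cat cvia (show (0:ℤ) ≤ a - 1 by omega) (show a - 1 ≤ b - 1 by omega)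
  have : 0 ≤ ∑ i ∈ Finset.Ioc (a-1) (b-1), cvia i := by
    apply Finset.sum_nonneg
    intro i hi
    simp only [Finset.mem_Ioc] at hi
    exact le_of_lt (hcvia i (by omega) (by omega))
  linarith

lemma cviaSum_eq_abs {l : ℤ} (cvia : ℤ → ℝ) (hcvia : ∀ z, 1 ≤ z → z < l → 0 < cvia z)
    {a b : ℤ} (ha1 : 1 ≤ a) (ha2 : a ≤ l) (hb1 : 1 ≤ b) (hb2 : b ≤ l) :
    cviaSum cvia a b = |S cvia b - S cvia a| := by
  rcases le_total a b with h | h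
  · rw [cviaSum_of_le cvia ha1 h, abs_of_nonneg (by linarith [S_mono cvia hcvia ha1 h hb2])]
  · rw [cviaSum_comm, cviaSum_of_le cvia hb1 h,
      abs_of_nonpos (by linarith [S_mono cvia hcvia hb1 h ha2])]
    ring

lemma cviaSum_nonneg {l : ℤ} (cvia : ℤ → ℝ) (hcvia : ∀ z, 1 ≤ z → z < l → 0 < cvia z)
    {a b : ℤ} (ha1 : 1 ≤ a) (ha2 : a ≤ l) (hb1 : 1 ≤ b) (hb2 : b ≤ l) :
    0 ≤ cviaSum cvia a b := by
  rw [cviaSum_eq_abs cvia hcvia ha1 ha2 hb1 hb2]; exact abs_nonneg _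

lemma cviaSum_triangle {l : ℤ} (cvia : ℤ → ℝ) (hcvia : ∀ z, 1 ≤ z → z < l → 0 < cvia z)
    {a b c : ℤ} (ha1 : 1 ≤ a) (ha2 : a ≤ l) (hb1 : 1 ≤ b) (hb2 : b ≤ l)
    (hc1 : 1 ≤ c) (hc2 : c ≤ l) :
    cviaSum cvia a c ≤ cviaSum cvia a b + cviaSum cvia b c := by
  rw [cviaSum_eq_abs cvia hcvia ha1 ha2 hc1 hc2, cviaSum_eq_abs cvia hcvia ha1 ha2 hb1 hb2,
    cviaSum_eq_abs cvia hcvia hb1 hb2 hc1 hc2]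
  have := abs_sub_le (S cvia c) (S cvia b) (S cvia a)
  have h2 := abs_sub_comm (S cvia c) (S cvia a)
  linarith

lemma cviaSum_adj (cvia : ℤ → ℝ) {a : ℤ} : cviaSum cvia a (a + 1) = cvia a := by
  unfold cviaSum
  rw [min_eq_left (by omega), max_eq_right (by omega)]
  simp

lemma cviaSum_split (cvia : ℤ → ℝ) {a b c : ℤ} (h1 : 1 ≤ a) (hab : a ≤ b) (hbc : b ≤ c) :
    cviaSum cvia a c = cviaSum cvia a b + cviaSum cvia b c := by
  rw [cviaSum_of_le cvia h1 (le_trans hab hbc), cviaSum_of_le cvia h1 hab,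
    cviaSum_of_le cvia (by omega) hbc]
  ring


lemma isWalk_single (A : Vtx → Vtx → Prop) (u : Vtx) : IsWalkA A [u] u u :=
  ⟨by simp, List.isChain_singleton _, rfl, rfl⟩

lemma wcost_single (c : Vtx → Vtx → ℝ) (u : Vtx) : wcost c [u] = 0 := rfl

lemma walk_cons {A : Vtx → Vtx → Prop} {c : Vtx → Vtx → ℝ} {P : List Vtx} {u v : Vtx}
    (w : Vtx) (hP : IsWalkA A P u v) (h : A w u) :
    IsWalkA A (w :: P) w v ∧ wcost c (w :: P) = c w u + wcost c P := by
  obtain ⟨hne, hch, hhd, hlast⟩ := hP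
  cases P with
  | nil => exact absurd rfl hne
  | cons a P' =>
    have ha : a = u := by simpa using hhd
    subst ha
    refine ⟨⟨by simp, List.isChain_cons_cons.mpr ⟨h, hch⟩, rfl, ?_⟩, rfl⟩
    rw [List.getLast?_cons_cons]
    exact hlast

lemma wcost_ge_of_lip {A : Vtx → Vtx → Prop} {c : Vtx → Vtx → ℝ} (f : Vtx → ℝ)
    (hf : ∀ u v, A u v → f u ≤ c u v + f v) :
    ∀ P u v, IsWalkA A P u v → f u - f v ≤ wcost c P := by
  intro P
  induction P with
  | nil => intro u v h; exact absurd rfl h.1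
  | cons a P ih =>
    intro u v h
    obtain ⟨hne, hch, hhd, hlast⟩ := h
    have ha : a = u := by simpa using hhd
    subst ha
    cases P with
    | nil =>
      have hv : a = v := by simpa using hlast
      subst hv
      simp [wcost]
    | cons b P' =>
      have h1 : A a b := (List.isChain_cons_cons.mp hch).1
      have hwalk : IsWalkA A (b :: P') b v := by
        refine ⟨by simp, (List.isChain_cons_cons.mp hch).2, rfl, ?_⟩
        rw [← hlast, List.getLast?_cons_cons]
      have h2 := ih b v hwalk
      have h3 := hf a b h1
      show f a - f v ≤ c a b + wcost c (b :: P')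
      linarith

lemma cviaSum_adj' (cvia : ℤ → ℝ) {a : ℤ} : cviaSum cvia a (a - 1) = cvia (a - 1) := by
  unfold cviaSum
  rw [min_eq_right (by omega), max_eq_left (by omega)]
  simp

lemma adj_via (l z₀ : ℤ) {a b : ℤ} (ha1 : 1 ≤ a) (ha2 : a ≤ l) (hb1 : 1 ≤ b) (hb2 : b ≤ l)
    (hab : |a - b| = 1) (x y : ℤ) : AdjNH l z₀ (x, y, a) (x, y, b) :=
  ⟨⟨ha1, ha2, hb1, hb2, by simpa using hab⟩, fun h => absurd rfl h⟩

lemma adj_horiz (l z₀ : ℤ) {x x' zz : ℤ} (y : ℤ) (h : |x - x'| = 1) (hz0 : z₀ ≤ zz)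
    (hz1 : 1 ≤ zz) (hz2 : zz ≤ l) : AdjNH l z₀ (x, y, zz) (x', y, zz) :=
  ⟨⟨hz1, hz2, hz1, hz2, by simpa using h⟩, fun _ => hz0⟩

lemma prepend_vias (l z₀ : ℤ) (ch cv cvia : ℤ → ℝ) (x y : ℤ) {t : ℤ} (ht1 : 1 ≤ t) (ht2 : t ≤ l)
    {a : ℤ} (ha1 : 1 ≤ a) (ha2 : a ≤ l) {Q : List Vtx} {w : Vtx}
    (hQ : IsWalkA (AdjNH l z₀) Q (x, y, t) w) :
    ∃ P, IsWalkA (AdjNH l z₀) P (x, y, a) w ∧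
      wcost (ecost ch cv cvia) P = cviaSum cvia a t + wcost (ecost ch cv cvia) Q := by
  rcases le_total a t with hle | hle
  · suffices H : ∀ n : ℕ, ∀ a : ℤ, 1 ≤ a → a + n = t → ∃ P, IsWalkA (AdjNH l z₀) P (x, y, a) w ∧
        wcost (ecost ch cv cvia) P = cviaSum cvia a t + wcost (ecost ch cv cvia) Q by
      exact H (t - a).toNat a ha1 (by omega)
    intro n
    induction n with
    | zero =>
      intro a ha hat
      have : a = t := by omega
      subst this
      exact ⟨Q, hQ, by rw [cviaSum_self]; ring⟩
    | succ n ih =>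
      intro a ha hat
      obtain ⟨P, hP, hcost⟩ := ih (a + 1) (by omega) (by omega)
      have hadj : AdjNH l z₀ (x, y, a) (x, y, a + 1) :=
        adj_via l z₀ ha (by omega) (by omega) (by omega) (by rw [Int.abs_eq_natAbs]; omega) x y
      obtain ⟨hW, hC⟩ := walk_cons (c := ecost ch cv cvia) (x, y, a) hP hadj
      refine ⟨_, hW, ?_⟩
      rw [hC, hcost]
      have he : ecost ch cv cvia (x, y, a) (x, y, a + 1) = cvia a := by
        simp only [ecost]
        rw [if_neg (by simp), if_neg (by simp)]
        simp [min_eq_left (show a ≤ a + 1 by omega)]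
      rw [he, cviaSum_split cvia ha (show a ≤ a + 1 by omega) (by omega), cviaSum_adj]
      ring
  · suffices H : ∀ n : ℕ, ∀ a : ℤ, a ≤ l → a - n = t → ∃ P, IsWalkA (AdjNH l z₀) P (x, y, a) w ∧
        wcost (ecost ch cv cvia) P = cviaSum cvia a t + wcost (ecost ch cv cvia) Q by
      exact H (a - t).toNat a ha2 (by omega)
    intro n
    induction n with
    | zero =>
      intro a ha hat
      have : a = t := by omega
      subst this
      exact ⟨Q, hQ, by rw [cviaSum_self]; ring⟩
    | succ n ih =>
      intro a ha hat
      obtain ⟨P, hP, hcost⟩ := ih (a - 1) (by omega) (by omega)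
      have hadj : AdjNH l z₀ (x, y, a) (x, y, a - 1) :=
        adj_via l z₀ (by omega) ha (by omega) (by omega) (by rw [Int.abs_eq_natAbs]; omega) x y
      obtain ⟨hW, hC⟩ := walk_cons (c := ecost ch cv cvia) (x, y, a) hP hadj
      refine ⟨_, hW, ?_⟩
      rw [hC, hcost]
      have he : ecost ch cv cvia (x, y, a) (x, y, a - 1) = cvia (a - 1) := by
        simp only [ecost]
        rw [if_neg (by simp), if_neg (by simp)]
        simp [min_eq_right (show a - 1 ≤ a by omega)]
      have hsplit : cviaSum cvia a t = cviaSum cvia a (a - 1) + cviaSum cvia (a - 1) t := by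
        rw [cviaSum_comm cvia a t, cviaSum_comm cvia a (a-1), cviaSum_comm cvia (a-1) t,
          cviaSum_split cvia ht1 (show t ≤ a - 1 by omega) (by omega)]
        ring
      rw [he, hsplit, cviaSum_adj']
      ring

lemma prepend_horiz (l z₀ : ℤ) (ch cv cvia : ℤ → ℝ) (y zz : ℤ) (hz0 : z₀ ≤ zz)
    (hz1 : 1 ≤ zz) (hz2 : zz ≤ l) (xs x : ℤ) {Q : List Vtx} {w : Vtx}
    (hQ : IsWalkA (AdjNH l z₀) Q (xs, y, zz) w) :
    ∃ P, IsWalkA (AdjNH l z₀) P (x, y, zz) w ∧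
      wcost (ecost ch cv cvia) P = ch zz * |(xs : ℝ) - (x : ℝ)| + wcost (ecost ch cv cvia) Q := by
  suffices H : ∀ n : ℕ, ∀ x : ℤ, (xs - x).natAbs = n → ∃ P, IsWalkA (AdjNH l z₀) P (x, y, zz) w ∧
      wcost (ecost ch cv cvia) P = ch zz * (n : ℝ) + wcost (ecost ch cv cvia) Q by
    obtain ⟨P, hP, hc⟩ := H (xs - x).natAbs x rfl
    refine ⟨P, hP, ?_⟩
    rw [hc]
    congr 1
    congr 1
    rw [Nat.cast_natAbs]
    push_cast
    ring_nf
  intro n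
  induction n with
  | zero =>
    intro x hx
    have : x = xs := by omega
    subst this
    exact ⟨Q, hQ, by norm_num⟩
  | succ n ih =>
    intro x hx
    rcases (show x + 1 + n = xs ∨ x - 1 - n = xs by omega) with hc | hc
    · obtain ⟨P, hP, hcost⟩ := ih (x + 1) (by omega)
      have hadj : AdjNH l z₀ (x, y, zz) (x + 1, y, zz) :=
        adj_horiz l z₀ y (by rw [Int.abs_eq_natAbs]; omega) hz0 hz1 hz2
      obtain ⟨hW, hC⟩ := walk_cons (c := ecost ch cv cvia) (x, y, zz) hP hadj
      refine ⟨_, hW, ?_⟩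
      rw [hC, hcost]
      have he : ecost ch cv cvia (x, y, zz) (x + 1, y, zz) = ch zz := by
        simp only [ecost]
        rw [if_pos (by simp)]
      rw [he]
      push_cast
      ring
    · obtain ⟨P, hP, hcost⟩ := ih (x - 1) (by omega)
      have hadj : AdjNH l z₀ (x, y, zz) (x - 1, y, zz) :=
        adj_horiz l z₀ y (by rw [Int.abs_eq_natAbs]; omega) hz0 hz1 hz2
      obtain ⟨hW, hC⟩ := walk_cons (c := ecost ch cv cvia) (x, y, zz) hP hadj
      refine ⟨_, hW, ?_⟩
      rw [hC, hcost]
      have he : ecost ch cv cvia (x, y, zz) (x - 1, y, zz) = ch zz := by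
        simp only [ecost]
        rw [if_pos (by simp; omega)]
      rw [he]
      push_cast
      ring


lemma adj_cases {l : ℤ} {u v : Vtx} (h : Adj l u v) :
    (u.2.1 = v.2.1 ∧ u.2.2 = v.2.2 ∧ |u.1 - v.1| = 1) ∨
    (u.1 = v.1 ∧ u.2.2 = v.2.2 ∧ |u.2.1 - v.2.1| = 1) ∨
    (u.1 = v.1 ∧ u.2.1 = v.2.1 ∧ |u.2.2 - v.2.2| = 1) := by
  obtain ⟨-, -, -, -, h5⟩ := h
  simp only [Int.abs_eq_natAbs] at h5 ⊢
  omega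

lemma inf'_add_const {s : Finset ℤ} (H : s.Nonempty) (f : ℤ → ℝ) (a : ℝ) :
    s.inf' H (fun z => f z + a) = s.inf' H f + a := by
  apply le_antisymm
  · obtain ⟨i, hi, hEq⟩ := Finset.exists_mem_eq_inf' H f
    rw [hEq]
    exact Finset.inf'_le _ hi
  · apply Finset.le_inf'
    intro b hb
    have := Finset.inf'_le f hb
    linarith

noncomputable def tf (ch cvia : ℤ → ℝ) (z₀ xs : ℤ) (u : Vtx) (z' : ℤ) : ℝ :=
  cviaSum cvia u.2.2 z' + ch z' * |(u.1 : ℝ) - (xs : ℝ)| + cviaSum cvia z' z₀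

noncomputable def F (l : ℤ) (ch cvia : ℤ → ℝ) (z₀ xs : ℤ) (h2 : z₀ ≤ l) (u : Vtx) : ℝ :=
  (Finset.Icc z₀ l).inf' (Finset.nonempty_Icc.mpr h2) (tf ch cvia z₀ xs u)

lemma lip (l : ℤ) (ch cv cvia : ℤ → ℝ)
    (hch : ∀ z, 1 ≤ z → z ≤ l → 0 < ch z)
    (hcv : ∀ z, 1 ≤ z → z ≤ l → 0 < cv z)
    (hcvia : ∀ z, 1 ≤ z → z < l → 0 < cvia z)
    (xs z₀ : ℤ) (h1 : 1 ≤ z₀) (h2 : z₀ ≤ l) :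
    ∀ u v : Vtx, AdjNH l z₀ u v →
      F l ch cvia z₀ xs h2 u ≤ ecost ch cv cvia u v + F l ch cvia z₀ xs h2 v := by
  have hne : (Finset.Icc z₀ l).Nonempty := Finset.nonempty_Icc.mpr h2
  rintro u v ⟨hAdj, hNH⟩
  obtain ⟨hu1, hu2, hv1, hv2, habs⟩ := hAdj
  obtain ⟨z'', hz''mem, hvEq⟩ := Finset.exists_mem_eq_inf' hne (tf ch cvia z₀ xs v)
  obtain ⟨hz''0, hz''l⟩ := Finset.mem_Icc.mp hz''mem
  have hz''1 : 1 ≤ z'' := le_trans h1 hz''0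
  rcases adj_cases ⟨hu1, hu2, hv1, hv2, habs⟩ with ⟨hy, hz, hx⟩ | ⟨hx, hz, hy⟩ | ⟨hx, hy, hz⟩
  · -- horizontal edge
    have hxne : u.1 ≠ v.1 := by
      intro hEq
      rw [hEq, sub_self, abs_zero] at hx
      exact absurd hx (by norm_num)
    have hz₀u : z₀ ≤ u.2.2 := hNH hxne
    have hec : ecost ch cv cvia u v = ch u.2.2 := if_pos hxne
    have h11 : |(u.1 : ℝ) - (v.1 : ℝ)| = 1 := by exact_mod_cast hx
    have hD : |(u.1 : ℝ) - (xs : ℝ)| ≤ |(v.1 : ℝ) - (xs : ℝ)| + 1 := by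
      have := abs_sub_le (u.1 : ℝ) (v.1 : ℝ) (xs : ℝ)
      rw [h11] at this
      linarith
    rw [hec]
    rcases le_total (ch z'') (ch u.2.2) with hcc | hcc
    · have t1 : F l ch cvia z₀ xs h2 u ≤ tf ch cvia z₀ xs u z'' := Finset.inf'_le _ hz''mem
      have t2 : ch z'' * |(u.1 : ℝ) - (xs : ℝ)| ≤ ch z'' * (|(v.1 : ℝ) - (xs : ℝ)| + 1) :=
        mul_le_mul_of_nonneg_left hD (le_of_lt (hch z'' hz''1 hz''l))
      have hFv : F l ch cvia z₀ xs h2 v = tf ch cvia z₀ xs v z'' := hvEq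
      simp only [tf] at t1 hFv
      rw [hz] at t1
      rw [hFv]
      nlinarith
    · have hmemζ : u.2.2 ∈ Finset.Icc z₀ l := Finset.mem_Icc.mpr ⟨hz₀u, hu2⟩
      have t1 : F l ch cvia z₀ xs h2 u ≤ tf ch cvia z₀ xs u u.2.2 := Finset.inf'_le _ hmemζ
      have tri : cviaSum cvia u.2.2 z₀ ≤ cviaSum cvia u.2.2 z'' + cviaSum cvia z'' z₀ :=
        cviaSum_triangle cvia hcvia hu1 hu2 hz''1 hz''l h1 h2
      have t2 : ch u.2.2 * |(v.1 : ℝ) - (xs : ℝ)| ≤ ch z'' * |(v.1 : ℝ) - (xs : ℝ)| :=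
        mul_le_mul_of_nonneg_right hcc (abs_nonneg _)
      have t3 : ch u.2.2 * |(u.1 : ℝ) - (xs : ℝ)| ≤ ch u.2.2 * (|(v.1 : ℝ) - (xs : ℝ)| + 1) :=
        mul_le_mul_of_nonneg_left hD (le_of_lt (hch u.2.2 hu1 hu2))
      have hFv : F l ch cvia z₀ xs h2 v = tf ch cvia z₀ xs v z'' := hvEq
      simp only [tf, cviaSum_self] at t1 hFv
      rw [hFv, ← hz]
      linarith
  · -- vertical edge
    have hyne : u.2.1 ≠ v.2.1 := by
      intro hEq
      rw [hEq, sub_self, abs_zero] at hy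
      exact absurd hy (by norm_num)
    have hec : ecost ch cv cvia u v = cv u.2.2 := by
      rw [ecost, if_neg (not_not_intro hx), if_pos hyne]
    have hFuv : F l ch cvia z₀ xs h2 u = F l ch cvia z₀ xs h2 v := by
      apply Finset.inf'_congr hne rfl
      intro x _
      simp only [tf]
      rw [hz, hx]
    have := hcv u.2.2 hu1 hu2
    rw [hec, hFuv]
    linarith
  · -- via edge
    have hec : ecost ch cv cvia u v = cvia (min u.2.2 v.2.2) := by
      rw [ecost, if_neg (not_not_intro hx), if_neg (not_not_intro hy)]
    have hstep : cviaSum cvia u.2.2 v.2.2 = cvia (min u.2.2 v.2.2) := by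
      rcases (show u.2.2 = v.2.2 + 1 ∨ v.2.2 = u.2.2 + 1 by
          rw [Int.abs_eq_natAbs] at hz; omega) with h | h
      · rw [h, cviaSum_comm, cviaSum_adj, min_eq_right (by omega)]
      · rw [h, cviaSum_adj, min_eq_left (by omega)]
    have t1 : F l ch cvia z₀ xs h2 u ≤ tf ch cvia z₀ xs u z'' := Finset.inf'_le _ hz''mem
    have tri : cviaSum cvia u.2.2 z'' ≤ cviaSum cvia u.2.2 v.2.2 + cviaSum cvia v.2.2 z'' :=
      cviaSum_triangle cvia hcvia hu1 hu2 hv1 hv2 hz''1 hz''l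
    have hFv : F l ch cvia z₀ xs h2 v = tf ch cvia z₀ xs v z'' := hvEq
    have hDu : |(u.1 : ℝ) - (xs : ℝ)| = |(v.1 : ℝ) - (xs : ℝ)| := by rw [hx]
    simp only [tf] at t1 hFv
    rw [hec, hFv]
    rw [hDu] at t1
    linarith

lemma F_target (l : ℤ) (ch cv cvia : ℤ → ℝ)
    (hch : ∀ z, 1 ≤ z → z ≤ l → 0 < ch z)
    (hcvia : ∀ z, 1 ≤ z → z < l → 0 < cvia z)
    (xs y z₀ : ℤ) (h1 : 1 ≤ z₀) (h2 : z₀ ≤ l) :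
    F l ch cvia z₀ xs h2 (xs, y, z₀) = 0 := by
  apply le_antisymm
  · have hmem : z₀ ∈ Finset.Icc z₀ l := Finset.mem_Icc.mpr ⟨le_refl _, h2⟩
    have hv : tf ch cvia z₀ xs (xs, y, z₀) z₀ = 0 := by
      simp [tf, cviaSum_self]
    unfold F
    exact le_trans (Finset.inf'_le _ hmem) (le_of_eq hv)
  · unfold F
    apply Finset.le_inf'
    intro b hb
    obtain ⟨hb0, hbl⟩ := Finset.mem_Icc.mp hb
    have hb1 : 1 ≤ b := le_trans h1 hb0
    simp only [tf]
    have n1 : 0 ≤ cviaSum cvia (xs, y, z₀).2.2 b := cviaSum_nonneg cvia hcvia h1 h2 hb1 hbl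
    have n2 : 0 ≤ cviaSum cvia b z₀ := cviaSum_nonneg cvia hcvia hb1 hbl h1 h2
    have n3 : 0 ≤ ch b * |((xs, y, z₀).1 : ℝ) - (xs : ℝ)| :=
      mul_nonneg (le_of_lt (hch b hb1 hbl)) (abs_nonneg _)
    linarith

lemma walk_exists (l : ℤ) (ch cv cvia : ℤ → ℝ) (r : Vtx) (hr1 : 1 ≤ r.2.2) (hr2 : r.2.2 ≤ l)
    (xs z₀ : ℤ) (h1 : 1 ≤ z₀) (h2 : z₀ ≤ l) {z' : ℤ} (hz' : z' ∈ Finset.Icc z₀ l) :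
    ∃ P, IsWalkA (AdjNH l z₀) P r (xs, r.2.1, z₀) ∧
      wcost (ecost ch cv cvia) P = tf ch cvia z₀ xs r z' := by
  obtain ⟨hz'0, hz'l⟩ := Finset.mem_Icc.mp hz'
  have hz'1 : 1 ≤ z' := le_trans h1 hz'0
  have W0 := isWalk_single (AdjNH l z₀) (xs, r.2.1, z₀)
  obtain ⟨Q1, hQ1, hc1⟩ := prepend_vias l z₀ ch cv cvia xs r.2.1 h1 h2 hz'1 hz'l W0
  obtain ⟨Q2, hQ2, hc2⟩ := prepend_horiz l z₀ ch cv cvia r.2.1 z' hz'0 hz'1 hz'l xs r.1 hQ1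
  obtain ⟨Q3, hQ3, hc3⟩ := prepend_vias l z₀ ch cv cvia r.1 r.2.1 hz'1 hz'l hr1 hr2 hQ2
  refine ⟨Q3, hQ3, ?_⟩
  rw [hc3, hc2, hc1, wcost_single]
  simp only [tf]
  rw [abs_sub_comm ((xs : ℝ)) ((r.1 : ℝ))]
  ring

lemma gdist_eq (l : ℤ) (ch cv cvia : ℤ → ℝ)
    (hch : ∀ z, 1 ≤ z → z ≤ l → 0 < ch z)
    (hcv : ∀ z, 1 ≤ z → z ≤ l → 0 < cv z)
    (hcvia : ∀ z, 1 ≤ z → z < l → 0 < cvia z)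
    (r : Vtx) (hr1 : 1 ≤ r.2.2) (hr2 : r.2.2 ≤ l) (xs : ℤ)
    (z₀ : ℤ) (h1 : 1 ≤ z₀) (h2 : z₀ ≤ l) :
    gdistA (AdjNH l z₀) (ecost ch cv cvia) r (xs, r.2.1, z₀) = F l ch cvia z₀ xs h2 r := by
  have hne : (Finset.Icc z₀ l).Nonempty := Finset.nonempty_Icc.mpr h2
  have hlip := lip l ch cv cvia hch hcv hcvia xs z₀ h1 h2
  have htgt := F_target l ch cv cvia hch hcvia xs r.2.1 z₀ h1 h2
  have hlow : ∀ m ∈ {m : ℝ | ∃ P, IsWalkA (AdjNH l z₀) P r (xs, r.2.1, z₀) ∧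
      wcost (ecost ch cv cvia) P = m}, F l ch cvia z₀ xs h2 r ≤ m := by
    rintro m ⟨P, hP, rfl⟩
    have := wcost_ge_of_lip (F l ch cvia z₀ xs h2) hlip P r (xs, r.2.1, z₀) hP
    rw [htgt] at this
    linarith
  have hnonempty : Set.Nonempty {m : ℝ | ∃ P, IsWalkA (AdjNH l z₀) P r (xs, r.2.1, z₀) ∧
      wcost (ecost ch cv cvia) P = m} := by
    obtain ⟨P, hP, hc⟩ := walk_exists l ch cv cvia r hr1 hr2 xs z₀ h1 h2
      (Finset.mem_Icc.mpr ⟨le_refl z₀, h2⟩)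
    exact ⟨_, P, hP, rfl⟩
  unfold gdistA
  apply le_antisymm
  · obtain ⟨z'', hz''mem, hEq⟩ := Finset.exists_mem_eq_inf' hne (tf ch cvia z₀ xs r)
    obtain ⟨P, hP, hc⟩ := walk_exists l ch cv cvia r hr1 hr2 xs z₀ h1 h2 hz''mem
    have hmem : wcost (ecost ch cv cvia) P ∈ {m : ℝ | ∃ P, IsWalkA (AdjNH l z₀) P r
        (xs, r.2.1, z₀) ∧ wcost (ecost ch cv cvia) P = m} := ⟨P, hP, rfl⟩
    have := csInf_le ⟨F l ch cvia z₀ xs h2 r, fun m hm => hlow m hm⟩ hmem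
    rw [hc] at this
    rw [show F l ch cvia z₀ xs h2 r = tf ch cvia z₀ xs r z'' from hEq]
    exact this
  · exact le_csInf hnonempty hlow

end Stmt3Aux

/-- With `v_z = (x_s, y_r, z)` and `d̄_z` the distance from `r` to `v_z` in
the subgraph without horizontal edges on layers `1, …, z−1`, we have
`d̄_l = c_{z_r,l} + c↔_l·|x_s − x_r|` and
`d̄_z = min (c_{z_r,z} + c↔_z·|x_s − x_r|) (d̄_{z+1} + c_{z,z+1})` for `1 ≤ z < l`. -/
theorem stmt3 (l : ℤ) (hl : 1 ≤ l) (ch cv cvia : ℤ → ℝ)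
    (hch : ∀ z, 1 ≤ z → z ≤ l → 0 < ch z)
    (hcv : ∀ z, 1 ≤ z → z ≤ l → 0 < cv z)
    (hcvia : ∀ z, 1 ≤ z → z < l → 0 < cvia z)
    (r s : Vtx) (hr : 1 ≤ r.2.2 ∧ r.2.2 ≤ l) (hs : 1 ≤ s.2.2 ∧ s.2.2 ≤ l) :
    gdistA (AdjNH l l) (ecost ch cv cvia) r (s.1, r.2.1, l)
        = cviaSum cvia r.2.2 l + ch l * |(s.1 : ℝ) - (r.1 : ℝ)| ∧
      ∀ z : ℤ, 1 ≤ z → z < l →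
        gdistA (AdjNH l z) (ecost ch cv cvia) r (s.1, r.2.1, z)
          = min (cviaSum cvia r.2.2 z + ch z * |(s.1 : ℝ) - (r.1 : ℝ)|)
              (gdistA (AdjNH l (z + 1)) (ecost ch cv cvia) r (s.1, r.2.1, z + 1) + cvia z) := by
  constructor
  · rw [Stmt3Aux.gdist_eq l ch cv cvia hch hcv hcvia r hr.1 hr.2 s.1 l hl le_rfl]
    unfold Stmt3Aux.F
    rw [Finset.inf'_congr _ (Finset.Icc_self l) (fun x _ => rfl), Finset.inf'_singleton]
    simp only [Stmt3Aux.tf, Stmt3Aux.cviaSum_self]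
    rw [abs_sub_comm ((r.1 : ℝ)) ((s.1 : ℝ))]
    ring
  · intro z hz1 hz2
    rw [Stmt3Aux.gdist_eq l ch cv cvia hch hcv hcvia r hr.1 hr.2 s.1 z hz1 (le_of_lt hz2),
      Stmt3Aux.gdist_eq l ch cv cvia hch hcv hcvia r hr.1 hr.2 s.1 (z + 1) (by omega) (by omega)]
    unfold Stmt3Aux.F
    have hset : Finset.Icc z l = insert z (Finset.Icc (z + 1) l) := by
      ext x; simp [Finset.mem_Icc]; omega
    have hne' : (Finset.Icc (z + 1) l).Nonempty := Finset.nonempty_Icc.mpr (by omega)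
    rw [Finset.inf'_congr _ hset (fun x _ => rfl), Finset.inf'_insert hne']
    have hcongr : (Finset.Icc (z + 1) l).inf' hne' (Stmt3Aux.tf ch cvia z s.1 r)
        = (Finset.Icc (z + 1) l).inf' hne'
            (fun z' => Stmt3Aux.tf ch cvia (z + 1) s.1 r z' + cvia z) := by
      apply Finset.inf'_congr hne' rfl
      intro x hx
      obtain ⟨hx1, hx2⟩ := Finset.mem_Icc.mp hx
      simp only [Stmt3Aux.tf]
      have : cviaSum cvia x z = cviaSum cvia x (z + 1) + cvia z := by
        rw [Stmt3Aux.cviaSum_comm cvia x z, Stmt3Aux.cviaSum_comm cvia x (z + 1),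
          Stmt3Aux.cviaSum_split cvia hz1 (show z ≤ z + 1 by omega) hx1,
          Stmt3Aux.cviaSum_adj]
        ring
      rw [this]
      ring
    rw [hcongr, Stmt3Aux.inf'_add_const hne' (Stmt3Aux.tf ch cvia (z + 1) s.1 r) (cvia z)]
    have htfz : Stmt3Aux.tf ch cvia z s.1 r z
        = cviaSum cvia r.2.2 z + ch z * |(s.1 : ℝ) - (r.1 : ℝ)| := by
      simp only [Stmt3Aux.tf, Stmt3Aux.cviaSum_self]
      rw [abs_sub_comm ((r.1 : ℝ)) ((s.1 : ℝ))]
      ring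
    rw [htfz]
end

section
/- Let x⁻ < x⁺ be real numbers. For a finite set F of affine functions ℝ → ℝ and g ∈ F, let I_F(g) := {x ∈ [x⁻, x⁺] : g(x) = min_{f ∈ F} f(x)}, call g non-dominated in F if I_F(g) contains more than one point, and in that case define key_F(g) := min_{x ∈ I_F(g)} g(x). Let F be a finite set of affine functions all of which are non-dominated in F, let g be a further affine function, and let F' := F ∪ {g}. Then: (i) key_{F'}(f) ≥ key_F(f) for every f ∈ F that is non-dominated in F', and (ii) there is at most one f ∈ F that is non-dominated in F' with key_{F'}(f) > key_F(f). -/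
/-- Affine functions `ℝ → ℝ` are represented by pairs `(a, b)`, i.e. `x ↦ a·x + b`. -/
def aeval (f : ℝ × ℝ) (x : ℝ) : ℝ := f.1 * x + f.2

/-- `Idom xm xp F g` is the set `I_F(g)` of points of `[x⁻, x⁺]` at which `g` attains the
pointwise minimum of `F`. -/
def Idom (xm xp : ℝ) (F : Finset (ℝ × ℝ)) (g : ℝ × ℝ) : Set ℝ :=
  { x | x ∈ Set.Icc xm xp ∧ ∀ f ∈ F, aeval g x ≤ aeval f x }

/-- `g` is non-dominated in `F` if `I_F(g)` contains more than one point. -/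
def NonDom (xm xp : ℝ) (F : Finset (ℝ × ℝ)) (g : ℝ × ℝ) : Prop :=
  ∃ x ∈ Idom xm xp F g, ∃ y ∈ Idom xm xp F g, x ≠ y

/-- `key_F(g)`, the minimum value of `g` on `I_F(g)`. -/
noncomputable def keyF (xm xp : ℝ) (F : Finset (ℝ × ℝ)) (g : ℝ × ℝ) : ℝ :=
  sInf (aeval g '' Idom xm xp F g)


lemma between_le {c d p q r : ℝ} (hpr : p ≤ r) (hrq : r ≤ q)
    (hp : c * p + d ≤ 0) (hq : c * q + d ≤ 0) : c * r + d ≤ 0 := by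
  rcases le_or_gt 0 c with h | h
  · nlinarith
  · nlinarith

lemma between_lt {c d p q r : ℝ} (hpr : p ≤ r) (hrq : r ≤ q)
    (hp : c * p + d < 0) (hq : c * q + d < 0) : c * r + d < 0 := by
  rcases le_or_gt 0 c with h | h
  · nlinarith
  · nlinarith

/-- strict between for aeval: if g < f at p and q, then at any r between. -/
lemma aeval_between_lt {gg f : ℝ × ℝ} {p q r : ℝ} (hpr : p ≤ r) (hrq : r ≤ q)
    (hp : aeval gg p < aeval f p) (hq : aeval gg q < aeval f q) :
    aeval gg r < aeval f r := by
  dsimp [aeval] at *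
  have := between_lt (c := gg.1 - f.1) (d := gg.2 - f.2) hpr hrq (by linarith) (by linarith)
  linarith

lemma Idom_between {xm xp : ℝ} {F : Finset (ℝ × ℝ)} {f : ℝ × ℝ} {p q r : ℝ}
    (hp : p ∈ Idom xm xp F f) (hq : q ∈ Idom xm xp F f) (hpr : p ≤ r) (hrq : r ≤ q) :
    r ∈ Idom xm xp F f := by
  obtain ⟨⟨hp1, hp2⟩, hpf⟩ := hp
  obtain ⟨⟨hq1, hq2⟩, hqf⟩ := hq
  refine ⟨⟨le_trans hp1 hpr, le_trans hrq hq2⟩, fun f' hf' => ?_⟩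
  have h1 := hpf f' hf'
  have h2 := hqf f' hf'
  dsimp [aeval] at *
  have := between_le (c := f.1 - f'.1) (d := f.2 - f'.2) hpr hrq (by linarith) (by linarith)
  linarith

lemma aeval_continuous (f : ℝ × ℝ) : Continuous (aeval f) := by
  unfold aeval; fun_prop

lemma Idom_compact (xm xp : ℝ) (F : Finset (ℝ × ℝ)) (g : ℝ × ℝ) :
    IsCompact (Idom xm xp F g) := by
  have hcl : IsClosed (Idom xm xp F g) := by
    have heq : Idom xm xp F g = Set.Icc xm xp ∩ ⋂ f ∈ F, {x | aeval g x ≤ aeval f x} := by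
      ext x
      simp [Idom, Set.mem_iInter]
    rw [heq]
    exact isClosed_Icc.inter (isClosed_biInter fun f _ =>
      isClosed_le (aeval_continuous g) (aeval_continuous f))
  exact isCompact_Icc.of_isClosed_subset hcl (fun x hx => hx.1)

lemma bddBelow_aeval_image (f : ℝ × ℝ) (xm xp : ℝ) (S : Set ℝ) (hS : S ⊆ Set.Icc xm xp) :
    BddBelow (aeval f '' S) := by
  refine ⟨min (aeval f xm) (aeval f xp), ?_⟩
  rintro v ⟨x, hx, rfl⟩
  obtain ⟨h1, h2⟩ := hS hx
  rcases le_or_gt 0 f.1 with h | h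
  · exact le_trans (min_le_left _ _) (by dsimp [aeval]; nlinarith)
  · exact le_trans (min_le_right _ _) (by dsimp [aeval]; nlinarith)

lemma keyF_exists_min (xm xp : ℝ) (F : Finset (ℝ × ℝ)) (g : ℝ × ℝ)
    (h : (Idom xm xp F g).Nonempty) :
    ∃ x ∈ Idom xm xp F g, keyF xm xp F g = aeval g x ∧
      ∀ y ∈ Idom xm xp F g, aeval g x ≤ aeval g y := by
  obtain ⟨x, hxmem, hmin⟩ :=
    (Idom_compact xm xp F g).exists_isMinOn h (aeval_continuous g).continuousOn
  refine ⟨x, hxmem, ?_, fun y hy => hmin hy⟩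
  apply le_antisymm
  · exact csInf_le ⟨aeval g x, by rintro v ⟨y, hy, rfl⟩; exact hmin hy⟩ ⟨x, hxmem, rfl⟩
  · exact le_csInf ⟨_, ⟨x, hxmem, rfl⟩⟩ (by rintro v ⟨y, hy, rfl⟩; exact hmin hy)

lemma keyF_le (xm xp : ℝ) (F : Finset (ℝ × ℝ)) (g : ℝ × ℝ) {x : ℝ}
    (hx : x ∈ Idom xm xp F g) : keyF xm xp F g ≤ aeval g x :=
  csInf_le (bddBelow_aeval_image g xm xp _ (fun z hz => hz.1)) ⟨x, hx, rfl⟩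

lemma eq_of_two_points {f₁ f₂ : ℝ × ℝ} {p q : ℝ} (hpq : p ≠ q)
    (h1 : aeval f₁ p = aeval f₂ p) (h2 : aeval f₁ q = aeval f₂ q) : f₁ = f₂ := by
  dsimp [aeval] at h1 h2
  have ha : f₁.1 = f₂.1 := by
    have h : (f₁.1 - f₂.1) * (p - q) = 0 := by ring_nf; linarith
    rcases mul_eq_zero.mp h with h | h
    · linarith [sub_eq_zero.mp h]
    · exact absurd (sub_eq_zero.mp h) hpq
  have hb : f₁.2 = f₂.2 := by rw [ha] at h1; linarith
  exact Prod.ext ha hb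

lemma Idom_insert_subset (xm xp : ℝ) (F : Finset (ℝ × ℝ)) (g f : ℝ × ℝ) :
    Idom xm xp (insert g F) f ⊆ Idom xm xp F f := fun z hz =>
  ⟨hz.1, fun f' hf' => hz.2 f' (Finset.mem_insert_of_mem hf')⟩

lemma extract (xm xp : ℝ) (F : Finset (ℝ × ℝ)) (g f : ℝ × ℝ)
    (hnd : NonDom xm xp F f) (hnd' : NonDom xm xp (insert g F) f)
    (hkey : keyF xm xp F f < keyF xm xp (insert g F) f) :
    ∃ x y, x ∈ Idom xm xp F f ∧ y ∈ Idom xm xp F f ∧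
      aeval f y ≤ aeval g y ∧ (∀ z ∈ Idom xm xp F f, aeval f x ≤ aeval f z) ∧
      aeval g x < aeval f x ∧ aeval f x < aeval f y := by
  obtain ⟨x0, hx0, -⟩ := hnd
  obtain ⟨x, hxI, hkx, hmin⟩ := keyF_exists_min xm xp F f ⟨x0, hx0⟩
  obtain ⟨y, hyI', -⟩ := hnd'
  have hyI : y ∈ Idom xm xp F f := Idom_insert_subset xm xp F g f hyI'
  have hyg : aeval f y ≤ aeval g y := hyI'.2 g (Finset.mem_insert_self g F)
  have hkey' : keyF xm xp (insert g F) f ≤ aeval f y := keyF_le _ _ _ _ hyI'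
  have hxy : aeval f x < aeval f y := by rw [hkx] at hkey; linarith
  have hgx : aeval g x < aeval f x := by
    by_contra hcon
    push_neg at hcon
    have hxI' : x ∈ Idom xm xp (insert g F) f :=
      ⟨hxI.1, fun f' hf' => (Finset.mem_insert.mp hf').elim (fun e => e ▸ hcon) (hxI.2 f')⟩
    have := keyF_le xm xp (insert g F) f hxI'
    rw [hkx] at hkey; linarith
  exact ⟨x, y, hxI, hyI, hyg, hmin, hgx, hxy⟩

section Cases

variable {xm xp : ℝ} {F : Finset (ℝ × ℝ)} {g f₁ f₂ : ℝ × ℝ} {x₁ y₁ x₂ y₂ : ℝ}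

lemma case_pos_neg (h₁ : f₁ ∈ F) (h₂ : f₂ ∈ F)
    (hx₁I : x₁ ∈ Idom xm xp F f₁) (hy₁I : y₁ ∈ Idom xm xp F f₁)
    (hyg₁ : aeval f₁ y₁ ≤ aeval g y₁) (hgx₁ : aeval g x₁ < aeval f₁ x₁)
    (hlt₁ : aeval f₁ x₁ < aeval f₁ y₁)
    (hx₂I : x₂ ∈ Idom xm xp F f₂) (hy₂I : y₂ ∈ Idom xm xp F f₂)
    (hyg₂ : aeval f₂ y₂ ≤ aeval g y₂) (hgx₂ : aeval g x₂ < aeval f₂ x₂)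
    (hlt₂ : aeval f₂ x₂ < aeval f₂ y₂)
    (ha₁ : 0 < f₁.1) (ha₂ : f₂.1 < 0) : f₁ = f₂ := by
  have hx₁y₁ : x₁ < y₁ := by dsimp [aeval] at hlt₁; nlinarith
  have hy₂x₂ : y₂ < x₂ := by dsimp [aeval] at hlt₂; nlinarith
  rcases lt_or_ge x₁ x₂ with hord | hord
  · have hgx₂f₁ : aeval g x₂ < aeval f₁ x₂ := lt_of_lt_of_le hgx₂ (hx₂I.2 f₁ h₁)
    have hgx₁f₂ : aeval g x₁ < aeval f₂ x₁ := lt_of_lt_of_le hgx₁ (hx₁I.2 f₂ h₂)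
    have hx₂y₁ : x₂ ≤ y₁ := by
      by_contra hc; push_neg at hc
      exact absurd (aeval_between_lt hx₁y₁.le hc.le hgx₁ hgx₂f₁) (not_lt.mpr hyg₁)
    have hy₂x₁ : y₂ ≤ x₁ := by
      by_contra hc; push_neg at hc
      exact absurd (aeval_between_lt hc.le hy₂x₂.le hgx₁f₂ hgx₂) (not_lt.mpr hyg₂)
    have hx₂I₁ : x₂ ∈ Idom xm xp F f₁ := Idom_between hx₁I hy₁I hord.le hx₂y₁
    have hx₁I₂ : x₁ ∈ Idom xm xp F f₂ := Idom_between hy₂I hx₂I hy₂x₁ hord.le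
    exact eq_of_two_points (ne_of_lt hord)
      (le_antisymm (hx₁I.2 f₂ h₂) (hx₁I₂.2 f₁ h₁))
      (le_antisymm (hx₂I₁.2 f₂ h₂) (hx₂I.2 f₁ h₁))
  · exfalso
    have h1 : aeval f₁ y₁ ≤ aeval f₂ y₁ := hy₁I.2 f₂ h₂
    have h2 : aeval f₂ x₂ ≤ aeval f₁ x₂ := hx₂I.2 f₁ h₁
    have hx₂y₁ : x₂ < y₁ := lt_of_le_of_lt hord hx₁y₁
    dsimp [aeval] at h1 h2
    nlinarith

lemma case_pos_pos (h₁ : f₁ ∈ F) (h₂ : f₂ ∈ F)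
    (hx₁I : x₁ ∈ Idom xm xp F f₁) (hy₁I : y₁ ∈ Idom xm xp F f₁)
    (hyg₁ : aeval f₁ y₁ ≤ aeval g y₁) (hgx₁ : aeval g x₁ < aeval f₁ x₁)
    (hlt₁ : aeval f₁ x₁ < aeval f₁ y₁)
    (hx₂I : x₂ ∈ Idom xm xp F f₂) (hy₂I : y₂ ∈ Idom xm xp F f₂)
    (hyg₂ : aeval f₂ y₂ ≤ aeval g y₂) (hgx₂ : aeval g x₂ < aeval f₂ x₂)
    (hlt₂ : aeval f₂ x₂ < aeval f₂ y₂)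
    (ha₁ : 0 < f₁.1) (ha₂ : 0 < f₂.1) (hord : x₁ ≤ x₂) : f₁ = f₂ := by
  have hx₁y₁ : x₁ < y₁ := by dsimp [aeval] at hlt₁; nlinarith
  have hx₂y₂ : x₂ < y₂ := by dsimp [aeval] at hlt₂; nlinarith
  have hgx₂f₁ : aeval g x₂ < aeval f₁ x₂ := lt_of_lt_of_le hgx₂ (hx₂I.2 f₁ h₁)
  have hx₂y₁ : x₂ ≤ y₁ := by
    by_contra hc; push_neg at hc
    exact absurd (aeval_between_lt hx₁y₁.le hc.le hgx₁ hgx₂f₁) (not_lt.mpr hyg₁)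
  have hpI₁ : min y₁ y₂ ∈ Idom xm xp F f₁ :=
    Idom_between hx₁I hy₁I (le_min hx₁y₁.le (by linarith)) (min_le_left _ _)
  have hpI₂ : min y₁ y₂ ∈ Idom xm xp F f₂ :=
    Idom_between hx₂I hy₂I (le_min hx₂y₁ hx₂y₂.le) (min_le_right _ _)
  have hx₂I₁ : x₂ ∈ Idom xm xp F f₁ := Idom_between hx₁I hy₁I hord hx₂y₁
  have hne : x₂ ≠ min y₁ y₂ := by
    intro hcon
    rcases le_total y₁ y₂ with hm | hm
    · rw [min_eq_left hm] at hcon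
      rw [hcon] at hgx₂ hx₂I
      have := hx₂I.2 f₁ h₁
      linarith
    · rw [min_eq_right hm] at hcon
      rw [hcon] at hgx₂
      linarith
  exact eq_of_two_points hne
    (le_antisymm (hx₂I₁.2 f₂ h₂) (hx₂I.2 f₁ h₁))
    (le_antisymm (hpI₁.2 f₂ h₂) (hpI₂.2 f₁ h₁))

lemma case_neg_neg (h₁ : f₁ ∈ F) (h₂ : f₂ ∈ F)
    (hx₁I : x₁ ∈ Idom xm xp F f₁) (hy₁I : y₁ ∈ Idom xm xp F f₁)
    (hyg₁ : aeval f₁ y₁ ≤ aeval g y₁) (hgx₁ : aeval g x₁ < aeval f₁ x₁)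
    (hlt₁ : aeval f₁ x₁ < aeval f₁ y₁)
    (hx₂I : x₂ ∈ Idom xm xp F f₂) (hy₂I : y₂ ∈ Idom xm xp F f₂)
    (hyg₂ : aeval f₂ y₂ ≤ aeval g y₂) (hgx₂ : aeval g x₂ < aeval f₂ x₂)
    (hlt₂ : aeval f₂ x₂ < aeval f₂ y₂)
    (ha₁ : f₁.1 < 0) (ha₂ : f₂.1 < 0) (hord : x₂ ≤ x₁) : f₁ = f₂ := by
  have hy₁x₁ : y₁ < x₁ := by dsimp [aeval] at hlt₁; nlinarith
  have hy₂x₂ : y₂ < x₂ := by dsimp [aeval] at hlt₂; nlinarith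
  have hgx₂f₁ : aeval g x₂ < aeval f₁ x₂ := lt_of_lt_of_le hgx₂ (hx₂I.2 f₁ h₁)
  have hy₁x₂ : y₁ ≤ x₂ := by
    by_contra hc; push_neg at hc
    exact absurd (aeval_between_lt hc.le hy₁x₁.le hgx₂f₁ hgx₁) (not_lt.mpr hyg₁)
  have hpI₁ : max y₁ y₂ ∈ Idom xm xp F f₁ :=
    Idom_between hy₁I hx₁I (le_max_left _ _) (max_le hy₁x₁.le (by linarith))
  have hpI₂ : max y₁ y₂ ∈ Idom xm xp F f₂ :=
    Idom_between hy₂I hx₂I (le_max_right _ _) (max_le hy₁x₂ hy₂x₂.le)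
  have hx₂I₁ : x₂ ∈ Idom xm xp F f₁ := Idom_between hy₁I hx₁I hy₁x₂ hord
  have hne : x₂ ≠ max y₁ y₂ := by
    intro hcon
    rcases le_total y₁ y₂ with hm | hm
    · rw [max_eq_right hm] at hcon
      rw [hcon] at hgx₂
      linarith
    · rw [max_eq_left hm] at hcon
      rw [hcon] at hgx₂ hx₂I
      have := hx₂I.2 f₁ h₁
      linarith
  exact eq_of_two_points hne
    (le_antisymm (hx₂I₁.2 f₂ h₂) (hx₂I.2 f₁ h₁))
    (le_antisymm (hpI₁.2 f₂ h₂) (hpI₂.2 f₁ h₁))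

end Cases

/-- Let `F` be a finite set of affine functions all of which are
non-dominated in `F`, let `g` be a further affine function and `F' = F ∪ {g}`.  Then
(i) `key_{F'}(f) ≥ key_F(f)` for every `f ∈ F` that is non-dominated in `F'`, and
(ii) there is at most one `f ∈ F` non-dominated in `F'` with `key_{F'}(f) > key_F(f)`. -/
theorem stmt7 (xm xp : ℝ) (hx : xm < xp) (F : Finset (ℝ × ℝ))
    (hF : ∀ f ∈ F, NonDom xm xp F f) (g : ℝ × ℝ) :
    (∀ f ∈ F, NonDom xm xp (insert g F) f →
      keyF xm xp F f ≤ keyF xm xp (insert g F) f) ∧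
    (∀ f₁ ∈ F, ∀ f₂ ∈ F,
      NonDom xm xp (insert g F) f₁ → NonDom xm xp (insert g F) f₂ →
      keyF xm xp F f₁ < keyF xm xp (insert g F) f₁ →
      keyF xm xp F f₂ < keyF xm xp (insert g F) f₂ → f₁ = f₂) := by
  constructor
  · intro f hf hnd
    obtain ⟨x, hxm, -⟩ := hnd
    exact csInf_le_csInf (bddBelow_aeval_image f xm xp _ (fun z hz => hz.1))
      ⟨aeval f x, x, hxm, rfl⟩ (Set.image_mono (Idom_insert_subset xm xp F g f))
  · intro f₁ h₁ f₂ h₂ hnd₁ hnd₂ hk₁ hk₂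
    obtain ⟨x₁, y₁, hx₁I, hy₁I, hyg₁, hmin₁, hgx₁, hlt₁⟩ :=
      extract xm xp F g f₁ (hF f₁ h₁) hnd₁ hk₁
    obtain ⟨x₂, y₂, hx₂I, hy₂I, hyg₂, hmin₂, hgx₂, hlt₂⟩ :=
      extract xm xp F g f₂ (hF f₂ h₂) hnd₂ hk₂
    rcases lt_trichotomy f₁.1 0 with ha₁ | ha₁ | ha₁
    · rcases lt_trichotomy f₂.1 0 with ha₂ | ha₂ | ha₂
      · rcases le_total x₂ x₁ with hord | hord
        · exact case_neg_neg h₁ h₂ hx₁I hy₁I hyg₁ hgx₁ hlt₁ hx₂I hy₂I hyg₂ hgx₂ hlt₂ ha₁ ha₂ hord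
        · exact (case_neg_neg h₂ h₁ hx₂I hy₂I hyg₂ hgx₂ hlt₂ hx₁I hy₁I hyg₁ hgx₁ hlt₁ ha₂ ha₁ hord).symm
      · exfalso; dsimp [aeval] at hlt₂; rw [ha₂] at hlt₂; simp at hlt₂
      · exact (case_pos_neg h₂ h₁ hx₂I hy₂I hyg₂ hgx₂ hlt₂ hx₁I hy₁I hyg₁ hgx₁ hlt₁ ha₂ ha₁).symm
    · exfalso; dsimp [aeval] at hlt₁; rw [ha₁] at hlt₁; simp at hlt₁
    · rcases lt_trichotomy f₂.1 0 with ha₂ | ha₂ | ha₂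
      · exact case_pos_neg h₁ h₂ hx₁I hy₁I hyg₁ hgx₁ hlt₁ hx₂I hy₂I hyg₂ hgx₂ hlt₂ ha₁ ha₂
      · exfalso; dsimp [aeval] at hlt₂; rw [ha₂] at hlt₂; simp at hlt₂
      · rcases le_total x₁ x₂ with hord | hord
        · exact case_pos_pos h₁ h₂ hx₁I hy₁I hyg₁ hgx₁ hlt₁ hx₂I hy₂I hyg₂ hgx₂ hlt₂ ha₁ ha₂ hord
        · exact (case_pos_pos h₂ h₁ hx₂I hy₂I hyg₂ hgx₂ hlt₂ hx₁I hy₁I hyg₁ hgx₁ hlt₁ ha₂ ha₁ hord).symm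
end
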